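/- arXiv:1701.05855 — 8 statements merged into one kernel-verified Lean document; each statement's English description precedes it below -/
import Mathlib

section
/- Let c > 0 be a constant and let G be a multi-hypergraph on vertex set V with m edges such that every vertex has degree less than cm. If A and B are disjoint subsets of V, each of which meets at least 2cm edges, then there is a partition of A ∪ B into three parts, each of which meets at least cm edges. -/
/-- The number of edges of the multi-hypergraph `G` (a multiset of finite edges,
counted with multiplicity) that meet the vertex set `A`. -/
def edgesMeeting {V : Type*} [DecidableEq V] (G : Multiset (Finset V)) (A : Finset V) : ℕ :=
  Multiset.card (G.filter fun e => (A ∩ e).Nonempty)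

section aux

variable {V : Type*} [DecidableEq V]

lemma em_meet_union_iff (X Y e : Finset V) :
    ((X ∪ Y) ∩ e).Nonempty ↔ (X ∩ e).Nonempty ∨ (Y ∩ e).Nonempty := by
  rw [Finset.union_inter_distrib_right]
  constructor
  · rintro ⟨x, hx⟩
    rcases Finset.mem_union.mp hx with h | h
    · exact Or.inl ⟨x, h⟩
    · exact Or.inr ⟨x, h⟩
  · rintro (⟨x, hx⟩ | ⟨x, hx⟩)
    · exact ⟨x, Finset.mem_union_left _ hx⟩
    · exact ⟨x, Finset.mem_union_right _ hx⟩

lemma em_cons (G : Multiset (Finset V)) (e : Finset V) (X : Finset V) :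
    edgesMeeting (e ::ₘ G) X
      = edgesMeeting G X + (if (X ∩ e).Nonempty then 1 else 0) := by
  unfold edgesMeeting
  rw [Multiset.filter_cons]
  split <;> simp [add_comm]

lemma em_mono (G : Multiset (Finset V)) {X Y : Finset V} (h : X ⊆ Y) :
    edgesMeeting G X ≤ edgesMeeting G Y := by
  unfold edgesMeeting
  apply Multiset.card_le_card
  apply Multiset.monotone_filter_right
  intro e he
  exact he.mono (Finset.inter_subset_inter h (Finset.Subset.refl e))

lemma em_union_le (G : Multiset (Finset V)) (X Y : Finset V) :
    edgesMeeting G (X ∪ Y) ≤ edgesMeeting G X + edgesMeeting G Y := by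
  induction G using Multiset.induction_on with
  | empty => simp [edgesMeeting]
  | cons e G ih =>
      rw [em_cons, em_cons, em_cons]
      have h := em_meet_union_iff X Y e
      by_cases h1 : (X ∩ e).Nonempty <;> by_cases h2 : (Y ∩ e).Nonempty <;>
        simp [h1, h2, h] <;> omega

lemma em_empty (G : Multiset (Finset V)) : edgesMeeting G ∅ = 0 := by
  unfold edgesMeeting
  rw [Multiset.filter_eq_nil.mpr] <;> simp

/-- key counting lemma: each edge meeting one side is counted ≥3 times among the nine unions,
each edge meeting both sides ≥5 times. -/
lemma key9 (G : Multiset (Finset V)) (A1 A2 A3 B1 B2 B3 : Finset V) :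
    5 * (edgesMeeting G (A1 ∪ A2 ∪ A3) + edgesMeeting G (B1 ∪ B2 ∪ B3)) ≤
    2 * (edgesMeeting G (A1 ∪ B1) + edgesMeeting G (A1 ∪ B2) + edgesMeeting G (A1 ∪ B3)
       + edgesMeeting G (A2 ∪ B1) + edgesMeeting G (A2 ∪ B2) + edgesMeeting G (A2 ∪ B3)
       + edgesMeeting G (A3 ∪ B1) + edgesMeeting G (A3 ∪ B2) + edgesMeeting G (A3 ∪ B3)) := by
  induction G using Multiset.induction_on with
  | empty => simp [edgesMeeting]
  | cons e G ih =>
      simp only [em_cons]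
      have hA : ((A1 ∪ A2 ∪ A3) ∩ e).Nonempty ↔
          ((A1 ∩ e).Nonempty ∨ (A2 ∩ e).Nonempty) ∨ (A3 ∩ e).Nonempty := by
        rw [em_meet_union_iff, em_meet_union_iff]
      have hB : ((B1 ∪ B2 ∪ B3) ∩ e).Nonempty ↔
          ((B1 ∩ e).Nonempty ∨ (B2 ∩ e).Nonempty) ∨ (B3 ∩ e).Nonempty := by
        rw [em_meet_union_iff, em_meet_union_iff]
      have h11 := em_meet_union_iff A1 B1 e
      have h12 := em_meet_union_iff A1 B2 e
      have h13 := em_meet_union_iff A1 B3 e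
      have h21 := em_meet_union_iff A2 B1 e
      have h22 := em_meet_union_iff A2 B2 e
      have h23 := em_meet_union_iff A2 B3 e
      have h31 := em_meet_union_iff A3 B1 e
      have h32 := em_meet_union_iff A3 B2 e
      have h33 := em_meet_union_iff A3 B3 e
      by_cases p1 : (A1 ∩ e).Nonempty <;> by_cases p2 : (A2 ∩ e).Nonempty <;>
        by_cases p3 : (A3 ∩ e).Nonempty <;> by_cases q1 : (B1 ∩ e).Nonempty <;>
        by_cases q2 : (B2 ∩ e).Nonempty <;> by_cases q3 : (B3 ∩ e).Nonempty <;>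
        (simp only [hA, hB, h11, h12, h13, h21, h22, h23, h31, h32, h33,
          p1, p2, p3, q1, q2, q3, iff_true, iff_false, or_true, true_or, or_false, false_or,
          not_true, not_false_iff, if_true, if_false]; omega)

/-- existence of a cardinality-minimal subset with many incident edges -/
lemma exists_min_em (G : Multiset (Finset V)) (t : ℝ) (A : Finset V)
    (hA : t ≤ (edgesMeeting G A : ℝ)) :
    ∃ M, M ⊆ A ∧ t ≤ (edgesMeeting G M : ℝ) ∧
      ∀ v ∈ M, ((edgesMeeting G (M \ {v}) : ℝ) < t) := by
  classical
  let F : Finset (Finset V) := A.powerset.filter fun X => t ≤ (edgesMeeting G X : ℝ)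
  have hFne : F.Nonempty := ⟨A, by simp [F, Finset.mem_powerset, hA]⟩
  obtain ⟨M, hMF, hmin⟩ := Finset.exists_min_image F Finset.card hFne
  have hM := Finset.mem_filter.mp hMF
  refine ⟨M, Finset.mem_powerset.mp hM.1, hM.2, ?_⟩
  intro v hv
  by_contra hge
  push_neg at hge
  have hsub : M \ {v} ∈ F := by
    refine Finset.mem_filter.mpr ⟨Finset.mem_powerset.mpr ?_, hge⟩
    exact (Finset.sdiff_subset).trans (Finset.mem_powerset.mp hM.1)
  have := hmin _ hsub
  have hlt : (M \ {v}).card < M.card := by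
    rw [← Finset.erase_eq]
    exact Finset.card_erase_lt_of_mem hv
  omega

/-- builder: given X_A ⊆ A, X_B ⊆ B with the three bounds, build the partition -/
lemma build_partition (G : Multiset (Finset V)) (t : ℝ) (A B XA XB : Finset V)
    (hXA : XA ⊆ A) (hXB : XB ⊆ B) (hAB : Disjoint A B)
    (h1 : t ≤ (edgesMeeting G (A \ XA) : ℝ))
    (h2 : t ≤ (edgesMeeting G (B \ XB) : ℝ))
    (h3 : t ≤ (edgesMeeting G (XA ∪ XB) : ℝ)) :
    ∃ P₁ P₂ P₃ : Finset V,
      P₁ ∪ P₂ ∪ P₃ = A ∪ B ∧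
      Disjoint P₁ P₂ ∧ Disjoint P₁ P₃ ∧ Disjoint P₂ P₃ ∧
      t ≤ (edgesMeeting G P₁ : ℝ) ∧
      t ≤ (edgesMeeting G P₂ : ℝ) ∧
      t ≤ (edgesMeeting G P₃ : ℝ) := by
  refine ⟨A \ XA, B \ XB, XA ∪ XB, ?_, ?_, ?_, ?_, h1, h2, h3⟩
  · ext x
    simp only [Finset.mem_union, Finset.mem_sdiff]
    constructor
    · rintro ((⟨h, _⟩ | ⟨h, _⟩) | (h | h))
      · exact Or.inl h
      · exact Or.inr h
      · exact Or.inl (hXA h)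
      · exact Or.inr (hXB h)
    · rintro (h | h)
      · by_cases hx : x ∈ XA
        · exact Or.inr (Or.inl hx)
        · exact Or.inl (Or.inl ⟨h, hx⟩)
      · by_cases hx : x ∈ XB
        · exact Or.inr (Or.inr hx)
        · exact Or.inl (Or.inr ⟨h, hx⟩)
  · exact hAB.mono Finset.sdiff_subset Finset.sdiff_subset
  · refine Finset.disjoint_union_right.mpr ⟨Finset.sdiff_disjoint, ?_⟩
    exact hAB.mono Finset.sdiff_subset hXB
  · refine Finset.disjoint_union_right.mpr ⟨?_, Finset.sdiff_disjoint⟩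
    exact (hAB.symm).mono Finset.sdiff_subset hXA

end aux

/-- If every vertex has degree less than `c * m` and `A`, `B` are disjoint sets each meeting
at least `2 * c * m` edges, then `A ∪ B` can be partitioned into three parts, each meeting
at least `c * m` edges. -/
theorem statement0 {V : Type*} [DecidableEq V] (c : ℝ) (hc : 0 < c)
    (G : Multiset (Finset V)) (hGne : ∀ e ∈ G, e.Nonempty)
    (m : ℕ) (hm : Multiset.card G = m)
    (hdeg : ∀ v : V, (edgesMeeting G {v} : ℝ) < c * m)
    (A B : Finset V) (hAB : Disjoint A B)
    (hA : 2 * c * m ≤ (edgesMeeting G A : ℝ))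
    (hB : 2 * c * m ≤ (edgesMeeting G B : ℝ)) :
    ∃ P₁ P₂ P₃ : Finset V,
      P₁ ∪ P₂ ∪ P₃ = A ∪ B ∧
      Disjoint P₁ P₂ ∧ Disjoint P₁ P₃ ∧ Disjoint P₂ P₃ ∧
      c * m ≤ (edgesMeeting G P₁ : ℝ) ∧
      c * m ≤ (edgesMeeting G P₂ : ℝ) ∧
      c * m ≤ (edgesMeeting G P₃ : ℝ) := by
  classical
  by_cases hm0 : m = 0
  · subst hm0
    refine ⟨A, B, ∅, by simp, hAB, by simp, by simp, ?_, ?_, ?_⟩ <;>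
      · simp only [Nat.cast_zero, mul_zero]
        exact Nat.cast_nonneg _
  · have hm1 : 0 < m := Nat.pos_of_ne_zero hm0
    have htpos : 0 < c * m := mul_pos hc (by exact_mod_cast hm1)
    have htA : c * m ≤ (edgesMeeting G A : ℝ) := by linarith
    have htB : c * m ≤ (edgesMeeting G B : ℝ) := by linarith
    obtain ⟨M, hMA, hMt, hMmin⟩ := exists_min_em G (c * m) A htA
    obtain ⟨N, hNB, hNt, hNmin⟩ := exists_min_em G (c * m) B htB
    have hMne : M.Nonempty := by
      rcases Finset.eq_empty_or_nonempty M with h | h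
      · exfalso; rw [h, em_empty] at hMt; simp at hMt; linarith
      · exact h
    have hNne : N.Nonempty := by
      rcases Finset.eq_empty_or_nonempty N with h | h
      · exfalso; rw [h, em_empty] at hNt; simp at hNt; linarith
      · exact h
    obtain ⟨v, hv⟩ := hMne
    obtain ⟨w, hw⟩ := hNne
    -- complement bound helper
    have hcompl : ∀ (C X : Finset V), 2 * c * m ≤ (edgesMeeting G C : ℝ) →
        (edgesMeeting G X : ℝ) < c * m → c * m ≤ (edgesMeeting G (C \ X) : ℝ) := by
      intro C X hC hX
      have hsub : C ⊆ (C \ X) ∪ X := by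
        rw [Finset.sdiff_union_self_eq_union]; exact Finset.subset_union_left
      have h1 := em_mono G hsub
      have h2 := em_union_le G (C \ X) X
      have h3 : (edgesMeeting G C : ℝ) ≤
          (edgesMeeting G (C \ X) : ℝ) + (edgesMeeting G X : ℝ) := by
        exact_mod_cast le_trans h1 h2
      linarith
    -- the six cells
    set A1 : Finset V := {v} with hA1def
    set A2 : Finset V := M \ {v} with hA2def
    set A3 : Finset V := A \ M with hA3def
    set B1 : Finset V := {w} with hB1def
    set B2 : Finset V := N \ {w} with hB2def
    set B3 : Finset V := B \ N with hB3def
    have hA1A : A1 ⊆ A := Finset.singleton_subset_iff.mpr (hMA hv)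
    have hA2A : A2 ⊆ A := Finset.sdiff_subset.trans hMA
    have hA3A : A3 ⊆ A := Finset.sdiff_subset
    have hB1B : B1 ⊆ B := Finset.singleton_subset_iff.mpr (hNB hw)
    have hB2B : B2 ⊆ B := Finset.sdiff_subset.trans hNB
    have hB3B : B3 ⊆ B := Finset.sdiff_subset
    -- complement bounds
    have hc1 : c * m ≤ (edgesMeeting G (A \ A1) : ℝ) := hcompl A A1 hA (hdeg v)
    have hc2 : c * m ≤ (edgesMeeting G (A \ A2) : ℝ) := hcompl A A2 hA (hMmin v hv)
    have hc3 : c * m ≤ (edgesMeeting G (A \ A3) : ℝ) := by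
      have : A \ A3 = M := by
        rw [hA3def, Finset.sdiff_sdiff_self_left, Finset.inter_eq_right.mpr hMA]
      rw [this]; exact hMt
    have hd1 : c * m ≤ (edgesMeeting G (B \ B1) : ℝ) := hcompl B B1 hB (hdeg w)
    have hd2 : c * m ≤ (edgesMeeting G (B \ B2) : ℝ) := hcompl B B2 hB (hNmin w hw)
    have hd3 : c * m ≤ (edgesMeeting G (B \ B3) : ℝ) := by
      have : B \ B3 = N := by
        rw [hB3def, Finset.sdiff_sdiff_self_left, Finset.inter_eq_right.mpr hNB]
      rw [this]; exact hNt
    -- nine cases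
    by_cases k11 : c * m ≤ (edgesMeeting G (A1 ∪ B1) : ℝ)
    · exact build_partition G (c*m) A B A1 B1 hA1A hB1B hAB hc1 hd1 k11
    by_cases k12 : c * m ≤ (edgesMeeting G (A1 ∪ B2) : ℝ)
    · exact build_partition G (c*m) A B A1 B2 hA1A hB2B hAB hc1 hd2 k12
    by_cases k13 : c * m ≤ (edgesMeeting G (A1 ∪ B3) : ℝ)
    · exact build_partition G (c*m) A B A1 B3 hA1A hB3B hAB hc1 hd3 k13
    by_cases k21 : c * m ≤ (edgesMeeting G (A2 ∪ B1) : ℝ)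
    · exact build_partition G (c*m) A B A2 B1 hA2A hB1B hAB hc2 hd1 k21
    by_cases k22 : c * m ≤ (edgesMeeting G (A2 ∪ B2) : ℝ)
    · exact build_partition G (c*m) A B A2 B2 hA2A hB2B hAB hc2 hd2 k22
    by_cases k23 : c * m ≤ (edgesMeeting G (A2 ∪ B3) : ℝ)
    · exact build_partition G (c*m) A B A2 B3 hA2A hB3B hAB hc2 hd3 k23
    by_cases k31 : c * m ≤ (edgesMeeting G (A3 ∪ B1) : ℝ)
    · exact build_partition G (c*m) A B A3 B1 hA3A hB1B hAB hc3 hd1 k31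
    by_cases k32 : c * m ≤ (edgesMeeting G (A3 ∪ B2) : ℝ)
    · exact build_partition G (c*m) A B A3 B2 hA3A hB2B hAB hc3 hd2 k32
    by_cases k33 : c * m ≤ (edgesMeeting G (A3 ∪ B3) : ℝ)
    · exact build_partition G (c*m) A B A3 B3 hA3A hB3B hAB hc3 hd3 k33
    -- contradiction via the counting lemma
    exfalso
    push_neg at k11 k12 k13 k21 k22 k23 k31 k32 k33
    have hAcell : A1 ∪ A2 ∪ A3 = A := by
      rw [hA1def, hA2def, hA3def, ← Finset.insert_eq, ← Finset.erase_eq,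
        Finset.insert_erase hv, Finset.union_sdiff_of_subset hMA]
    have hBcell : B1 ∪ B2 ∪ B3 = B := by
      rw [hB1def, hB2def, hB3def, ← Finset.insert_eq, ← Finset.erase_eq,
        Finset.insert_erase hw, Finset.union_sdiff_of_subset hNB]
    have K := key9 G A1 A2 A3 B1 B2 B3
    rw [hAcell, hBcell] at K
    have KR : 5 * ((edgesMeeting G A : ℝ) + (edgesMeeting G B : ℝ)) ≤
        2 * ((edgesMeeting G (A1 ∪ B1) : ℝ) + (edgesMeeting G (A1 ∪ B2) : ℝ)
          + (edgesMeeting G (A1 ∪ B3) : ℝ) + (edgesMeeting G (A2 ∪ B1) : ℝ)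
          + (edgesMeeting G (A2 ∪ B2) : ℝ) + (edgesMeeting G (A2 ∪ B3) : ℝ)
          + (edgesMeeting G (A3 ∪ B1) : ℝ) + (edgesMeeting G (A3 ∪ B2) : ℝ)
          + (edgesMeeting G (A3 ∪ B3) : ℝ)) := by
      exact_mod_cast K
    linarith
end

section
/- Let c > 0 be a constant and let G be a multi-hypergraph on vertex set V with m edges such that every vertex has degree less than cm. If A and B are disjoint subsets of V, each of which meets at least 2cm edges, then there is a partition of A ∪ B into three parts such that two of the parts each meet at least cm edges and the third part meets at least (10/9)cm edges. -/
lemma count_le_add {α : Type*} (s : Multiset α) (p q r : α → Prop)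
    [DecidablePred p] [DecidablePred q] [DecidablePred r] (h : ∀ e, p e → q e ∨ r e) :
    Multiset.card (s.filter p) ≤ Multiset.card (s.filter q) + Multiset.card (s.filter r) := by
  induction s using Multiset.induction_on with
  | empty => simp
  | cons a t ih =>
      by_cases hp : p a <;> by_cases hq : q a <;> by_cases hr : r a <;>
        first
          | (simp [Multiset.filter_cons, hp, hq, hr] <;> omega)
          | (rcases h a hp with h' | h' <;> [exact absurd h' hq; exact absurd h' hr])

lemma count_add_le {α : Type*} (s : Multiset α) (p q r : α → Prop)
    [DecidablePred p] [DecidablePred q] [DecidablePred r]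
    (hq : ∀ e, q e → p e) (hr : ∀ e, r e → p e) (hqr : ∀ e, ¬(q e ∧ r e)) :
    Multiset.card (s.filter q) + Multiset.card (s.filter r) ≤ Multiset.card (s.filter p) := by
  induction s using Multiset.induction_on with
  | empty => simp
  | cons a t ih =>
      by_cases hpa : p a
      · by_cases hqa : q a
        · have hra : ¬ r a := fun h => hqr a ⟨hqa, h⟩
          simp [Multiset.filter_cons, hpa, hqa, hra] <;> omega
        · by_cases hra : r a <;> simp [Multiset.filter_cons, hpa, hqa, hra] <;> omega
      · have hqa : ¬ q a := fun h => hpa (hq a h)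
        have hra : ¬ r a := fun h => hpa (hr a h)
        simp [Multiset.filter_cons, hpa, hqa, hra] <;> omega

section Main

variable {V : Type*} [DecidableEq V]

/-- edges meeting `S` but not `X` -/
noncomputable def nw (G : Multiset (Finset V)) (X S : Finset V) : ℕ :=
  Multiset.card (G.filter fun e => (S ∩ e).Nonempty ∧ ¬ (X ∩ e).Nonempty)

lemma covers {X S : Finset V} (hXS : X ⊆ S) (e : Finset V) (he : (S ∩ e).Nonempty) :
    (X ∩ e).Nonempty ∨ ((S \ X) ∩ e).Nonempty := by
  by_cases h : (X ∩ e).Nonempty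
  · exact Or.inl h
  · right
    obtain ⟨x, hx⟩ := he
    rw [Finset.mem_inter] at hx
    refine ⟨x, Finset.mem_inter.2 ⟨Finset.mem_sdiff.2 ⟨hx.1, ?_⟩, hx.2⟩⟩
    intro hxX; exact h ⟨x, Finset.mem_inter.2 ⟨hxX, hx.2⟩⟩

lemma dsub (G : Multiset (Finset V)) {X S : Finset V} (hXS : X ⊆ S) :
    edgesMeeting G S ≤ edgesMeeting G X + edgesMeeting G (S \ X) :=
  count_le_add G _ _ _ (fun e he => covers hXS e he)

lemma d_le_nw (G : Multiset (Finset V)) (X S : Finset V) :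
    edgesMeeting G S ≤ nw G X S + edgesMeeting G X := by
  classical
  exact count_le_add G _ _ _ (fun e he => by by_cases h : (X ∩ e).Nonempty <;> tauto)

lemma nw_split (G : Multiset (Finset V)) (X : Finset V) {U S : Finset V} (hUS : U ⊆ S) :
    nw G X S ≤ nw G X U + nw G X (S \ U) := by
  classical
  exact count_le_add G _ _ _ (fun e he => by
    rcases covers hUS e he.1 with h | h
    · exact Or.inl ⟨h, he.2⟩
    · exact Or.inr ⟨h, he.2⟩)

lemma d_union_ge (G : Multiset (Finset V)) (X S : Finset V) :
    edgesMeeting G X + nw G X S ≤ edgesMeeting G (X ∪ S) := by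
  classical
  refine count_add_le G _ _ _ (fun e he => ?_) (fun e he => ?_) (fun e he => he.2.2 he.1)
  · exact he.mono (Finset.inter_subset_inter_right Finset.subset_union_left)
  · exact he.1.mono (Finset.inter_subset_inter_right Finset.subset_union_right)

lemma d_empty (G : Multiset (Finset V)) : edgesMeeting G (∅ : Finset V) = 0 := by
  simp [edgesMeeting, Multiset.filter_eq_nil]

end Main

/-- If every vertex has degree less than `c * m` and `A`, `B` are disjoint sets each meeting
at least `2 * c * m` edges, then `A ∪ B` can be partitioned into three parts, two of which
meet at least `c * m` edges and the third at least `(10/9) * c * m` edges. -/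
theorem statement1 {V : Type*} [DecidableEq V] (c : ℝ) (hc : 0 < c)
    (G : Multiset (Finset V)) (hGne : ∀ e ∈ G, e.Nonempty)
    (m : ℕ) (hm : Multiset.card G = m)
    (hdeg : ∀ v : V, (edgesMeeting G {v} : ℝ) < c * m)
    (A B : Finset V) (hAB : Disjoint A B)
    (hA : 2 * c * m ≤ (edgesMeeting G A : ℝ))
    (hB : 2 * c * m ≤ (edgesMeeting G B : ℝ)) :
    ∃ P₁ P₂ P₃ : Finset V,
      P₁ ∪ P₂ ∪ P₃ = A ∪ B ∧
      Disjoint P₁ P₂ ∧ Disjoint P₁ P₃ ∧ Disjoint P₂ P₃ ∧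
      c * m ≤ (edgesMeeting G P₁ : ℝ) ∧
      c * m ≤ (edgesMeeting G P₂ : ℝ) ∧
      (10 / 9) * c * m ≤ (edgesMeeting G P₃ : ℝ) := by
  classical
  rcases Nat.eq_zero_or_pos m with hm0 | hmpos
  · subst hm0
    refine ⟨A, B, ∅, by simp, hAB, by simp, by simp, ?_, ?_, ?_⟩ <;>
      · push_cast
        simp only [mul_zero]
        positivity
  · have hcm : 0 < c * (m : ℝ) := by positivity
    -- minimal large set extraction
    have minlarge : ∀ S : Finset V, c * m ≤ (edgesMeeting G S : ℝ) →
        ∃ U, U ⊆ S ∧ c * m ≤ (edgesMeeting G U : ℝ) ∧ U.Nonempty ∧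
          ∀ v ∈ U, (edgesMeeting G (U \ {v}) : ℝ) < c * m := by
      intro S hS
      obtain ⟨U, hUmem, hUmin⟩ := Finset.exists_min_image
        (S.powerset.filter fun U => c * m ≤ (edgesMeeting G U : ℝ)) Finset.card
        ⟨S, by simp [hS]⟩
      simp only [Finset.mem_filter, Finset.mem_powerset] at hUmem
      refine ⟨U, hUmem.1, hUmem.2, ?_, ?_⟩
      · rcases U.eq_empty_or_nonempty with h | h
        · exfalso
          rw [h, d_empty] at hUmem
          exact absurd hUmem.2 (by push_cast; linarith)
        · exact h
      · intro v hv
        by_contra hle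
        push_neg at hle
        have hmem2 : U \ {v} ∈ S.powerset.filter fun U => c * m ≤ (edgesMeeting G U : ℝ) := by
          simp only [Finset.mem_filter, Finset.mem_powerset]
          exact ⟨(Finset.sdiff_subset).trans hUmem.1, hle⟩
        have hcard := hUmin _ hmem2
        have : (U \ {v}).card < U.card := by
          rw [← Finset.erase_eq]
          exact Finset.card_erase_lt_of_mem hv
        omega
    -- the co-large family of A, and the maximizer A'
    obtain ⟨A', hA'F, hA'max⟩ := Finset.exists_max_image
      (A.powerset.filter fun X => c * m ≤ (edgesMeeting G (A \ X) : ℝ))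
      (fun X => edgesMeeting G X)
      ⟨∅, by
        simp only [Finset.mem_filter, Finset.mem_powerset, Finset.empty_subset, true_and,
          Finset.sdiff_empty]
        linarith⟩
    simp only [Finset.mem_filter, Finset.mem_powerset] at hA'F
    obtain ⟨hA'sub, hA'co⟩ := hA'F
    -- sigma lemma : c*m < 2 * d A'
    have hs2 : c * m < 2 * (edgesMeeting G A' : ℝ) := by
      obtain ⟨A₁, hA₁sub, hA₁large, ⟨v, hv⟩, hA₁min⟩ := minlarge A (by linarith)
      have h1 : edgesMeeting G A₁ ≤ edgesMeeting G {v} + edgesMeeting G (A₁ \ {v}) :=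
        dsub G (Finset.singleton_subset_iff.2 hv)
      have h2 := hA₁min v hv
      have h3 : (edgesMeeting G {v} : ℝ) ≤ edgesMeeting G A' := by
        have hmem : {v} ∈ A.powerset.filter fun X => c * m ≤ (edgesMeeting G (A \ X) : ℝ) := by
          simp only [Finset.mem_filter, Finset.mem_powerset, Finset.singleton_subset_iff]
          refine ⟨hA₁sub hv, ?_⟩
          have h4 : edgesMeeting G A ≤ edgesMeeting G {v} + edgesMeeting G (A \ {v}) :=
            dsub G (Finset.singleton_subset_iff.2 (hA₁sub hv))
          have h5 := hdeg v
          have h4' : (edgesMeeting G A : ℝ) ≤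
              (edgesMeeting G {v} : ℝ) + (edgesMeeting G (A \ {v}) : ℝ) := by exact_mod_cast h4
          linarith
        exact_mod_cast hA'max _ hmem
      have h5 : (edgesMeeting G (A \ A₁) : ℝ) ≤ edgesMeeting G A' := by
        have hmem : A \ A₁ ∈ A.powerset.filter fun X => c * m ≤ (edgesMeeting G (A \ X) : ℝ) := by
          simp only [Finset.mem_filter, Finset.mem_powerset]
          refine ⟨Finset.sdiff_subset, ?_⟩
          rwa [Finset.sdiff_sdiff_self_left, Finset.inter_eq_right.2 hA₁sub]
        exact_mod_cast hA'max _ hmem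
      have h6 : edgesMeeting G A ≤ edgesMeeting G A₁ + edgesMeeting G (A \ A₁) :=
        dsub G hA₁sub
      have h1' : (edgesMeeting G A₁ : ℝ) ≤
          (edgesMeeting G {v} : ℝ) + (edgesMeeting G (A₁ \ {v}) : ℝ) := by exact_mod_cast h1
      have h6' : (edgesMeeting G A : ℝ) ≤
          (edgesMeeting G A₁ : ℝ) + (edgesMeeting G (A \ A₁) : ℝ) := by exact_mod_cast h6
      linarith
    -- key lemma
    have key : ∀ τ : ℝ,
        (∀ B'' , B'' ⊆ B → c * m ≤ (edgesMeeting G (B \ B'') : ℝ) → (nw G A' B'' : ℝ) < τ) →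
        2 * (c * m) - (edgesMeeting G A' : ℝ) < 3 * τ := by
      intro τ hfail
      have h0 : edgesMeeting G B ≤ nw G A' B + edgesMeeting G A' := d_le_nw G A' B
      obtain ⟨Vm, hVsub, hVlarge, ⟨v, hv⟩, hVmin⟩ := minlarge B (by linarith)
      have hBV : (nw G A' (B \ Vm) : ℝ) < τ := by
        refine hfail _ Finset.sdiff_subset ?_
        rwa [Finset.sdiff_sdiff_self_left, Finset.inter_eq_right.2 hVsub]
      have hsplit : nw G A' B ≤ nw G A' Vm + nw G A' (B \ Vm) := nw_split G A' hVsub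
      have hvcol : (nw G A' {v} : ℝ) < τ := by
        refine hfail _ (Finset.singleton_subset_iff.2 (hVsub hv)) ?_
        have h4 : edgesMeeting G B ≤ edgesMeeting G {v} + edgesMeeting G (B \ {v}) :=
          dsub G (Finset.singleton_subset_iff.2 (hVsub hv))
        have h5 := hdeg v
        have h4' : (edgesMeeting G B : ℝ) ≤
            (edgesMeeting G {v} : ℝ) + (edgesMeeting G (B \ {v}) : ℝ) := by exact_mod_cast h4
        linarith
      have hVv : (nw G A' (Vm \ {v}) : ℝ) < τ := by
        refine hfail _ (Finset.sdiff_subset.trans hVsub) ?_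
        have h4 : edgesMeeting G B ≤ edgesMeeting G (Vm \ {v}) + edgesMeeting G (B \ (Vm \ {v})) :=
          dsub G (Finset.sdiff_subset.trans hVsub)
        have h5 := hVmin v hv
        have h4' : (edgesMeeting G B : ℝ) ≤ (edgesMeeting G (Vm \ {v}) : ℝ) +
            (edgesMeeting G (B \ (Vm \ {v})) : ℝ) := by exact_mod_cast h4
        linarith
      have hsplit2 : nw G A' Vm ≤ nw G A' {v} + nw G A' (Vm \ {v}) :=
        nw_split G A' (Finset.singleton_subset_iff.2 hv)
      have h0' : (edgesMeeting G B : ℝ) ≤ (nw G A' B : ℝ) + (edgesMeeting G A' : ℝ) := by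
        exact_mod_cast h0
      have hsplit' : (nw G A' B : ℝ) ≤ (nw G A' Vm : ℝ) + (nw G A' (B \ Vm) : ℝ) := by
        exact_mod_cast hsplit
      have hsplit2' : (nw G A' Vm : ℝ) ≤ (nw G A' {v} : ℝ) + (nw G A' (Vm \ {v}) : ℝ) := by
        exact_mod_cast hsplit2
      linarith
    -- common facts for assembling partitions
    have hdAA' : edgesMeeting G A ≤ edgesMeeting G A' + edgesMeeting G (A \ A') := dsub G hA'sub
    by_cases hcase : (2 / 3) * (c * m) ≤ (edgesMeeting G A' : ℝ)
    · -- large s case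
      have hex : ∃ B'', B'' ⊆ B ∧ c * m ≤ (edgesMeeting G (B \ B'') : ℝ) ∧
          (10 / 9) * (c * m) - (edgesMeeting G A' : ℝ) ≤ (nw G A' B'' : ℝ) := by
        by_contra hno
        push_neg at hno
        have := key _ (fun B'' h1 h2 => hno B'' h1 h2)
        linarith
      obtain ⟨B'', hB''sub, hB''co, hB''nw⟩ := hex
      refine ⟨A \ A', B \ B'', A' ∪ B'', ?_, ?_, ?_, ?_, hA'co, hB''co, ?_⟩
      · ext x
        simp only [Finset.mem_union, Finset.mem_sdiff]
        have h1 : x ∈ A' → x ∈ A := fun h => hA'sub h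
        have h2 : x ∈ B'' → x ∈ B := fun h => hB''sub h
        tauto
      · rw [Finset.disjoint_left]
        intro x hx hx2
        exact (Finset.disjoint_left.1 hAB) (Finset.mem_sdiff.1 hx).1 (Finset.mem_sdiff.1 hx2).1
      · rw [Finset.disjoint_left]
        intro x hx hx2
        rcases Finset.mem_union.1 hx2 with h | h
        · exact (Finset.mem_sdiff.1 hx).2 h
        · exact (Finset.disjoint_left.1 hAB) (Finset.mem_sdiff.1 hx).1 (hB''sub h)
      · rw [Finset.disjoint_left]
        intro x hx hx2
        rcases Finset.mem_union.1 hx2 with h | h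
        · exact (Finset.disjoint_left.1 hAB) (hA'sub h) (Finset.mem_sdiff.1 hx).1
        · exact (Finset.mem_sdiff.1 hx).2 h
      · have h7 : edgesMeeting G A' + nw G A' B'' ≤ edgesMeeting G (A' ∪ B'') :=
          d_union_ge G A' B''
        have h7' : (edgesMeeting G A' : ℝ) + (nw G A' B'' : ℝ) ≤
            (edgesMeeting G (A' ∪ B'') : ℝ) := by exact_mod_cast h7
        linarith
    · -- small s case
      push_neg at hcase
      have hex : ∃ B'', B'' ⊆ B ∧ c * m ≤ (edgesMeeting G (B \ B'') : ℝ) ∧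
          c * m - (edgesMeeting G A' : ℝ) ≤ (nw G A' B'' : ℝ) := by
        by_contra hno
        push_neg at hno
        have := key _ (fun B'' h1 h2 => hno B'' h1 h2)
        linarith
      obtain ⟨B'', hB''sub, hB''co, hB''nw⟩ := hex
      refine ⟨B \ B'', A' ∪ B'', A \ A', ?_, ?_, ?_, ?_, hB''co, ?_, ?_⟩
      · ext x
        simp only [Finset.mem_union, Finset.mem_sdiff]
        have h1 : x ∈ A' → x ∈ A := fun h => hA'sub h
        have h2 : x ∈ B'' → x ∈ B := fun h => hB''sub h
        tauto
      · rw [Finset.disjoint_left]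
        intro x hx hx2
        rcases Finset.mem_union.1 hx2 with h | h
        · exact (Finset.disjoint_left.1 hAB) (hA'sub h) (Finset.mem_sdiff.1 hx).1
        · exact (Finset.mem_sdiff.1 hx).2 h
      · rw [Finset.disjoint_left]
        intro x hx hx2
        exact (Finset.disjoint_left.1 hAB) (Finset.mem_sdiff.1 hx2).1 (Finset.mem_sdiff.1 hx).1
      · rw [Finset.disjoint_left]
        intro x hx hx2
        rcases Finset.mem_union.1 hx with h | h
        · exact (Finset.mem_sdiff.1 hx2).2 h
        · exact (Finset.disjoint_left.1 hAB) (Finset.mem_sdiff.1 hx2).1 (hB''sub h)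
      · have h7 : edgesMeeting G A' + nw G A' B'' ≤ edgesMeeting G (A' ∪ B'') :=
          d_union_ge G A' B''
        have h7' : (edgesMeeting G A' : ℝ) + (nw G A' B'' : ℝ) ≤
            (edgesMeeting G (A' ∪ B'') : ℝ) := by exact_mod_cast h7
        linarith
      · have hdAA'' : (edgesMeeting G A : ℝ) ≤
            (edgesMeeting G A' : ℝ) + (edgesMeeting G (A \ A') : ℝ) := by exact_mod_cast hdAA'
        linarith
end

section
/- Let c > 0 be a constant and let G be a multi-hypergraph with m edges on vertex set V such that every vertex of A has degree less than cm, and suppose every edge of G meets the set A ⊆ V in at most one vertex. If d(A) ≥ 2cm, then A may be partitioned into three parts A₁, A₂, A₃ such that the union of any two of the parts meets at least cm edges. -/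
lemma edgesMeeting_add {V : Type*} [DecidableEq V] (G : Multiset (Finset V)) (A B C : Finset V)
    (hBC : Disjoint B C) (hB : B ⊆ A) (hC : C ⊆ A)
    (hone : ∀ e ∈ G, (A ∩ e).card ≤ 1) :
    edgesMeeting G (B ∪ C) = edgesMeeting G B + edgesMeeting G C := by
  unfold edgesMeeting
  rw [← Multiset.card_add, Multiset.filter_add_filter]
  have h0 : Multiset.filter (fun e => (B ∩ e).Nonempty ∧ (C ∩ e).Nonempty) G = 0 := by
    rw [Multiset.filter_eq_nil]
    rintro e he ⟨⟨b, hb⟩, ⟨c, hcc⟩⟩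
    simp only [Finset.mem_inter] at hb hcc
    have hbc : b ≠ c := fun h => (Finset.disjoint_left.1 hBC) hb.1 (h ▸ hcc.1)
    have hsub : ({b, c} : Finset V) ⊆ A ∩ e := by
      intro x hx
      rcases Finset.mem_insert.1 hx with rfl | hx
      · exact Finset.mem_inter.2 ⟨hB hb.1, hb.2⟩
      · rw [Finset.mem_singleton] at hx; subst hx
        exact Finset.mem_inter.2 ⟨hC hcc.1, hcc.2⟩
    have h2 := Finset.card_le_card hsub
    rw [Finset.card_pair hbc] at h2
    have := hone e he
    omega
  rw [h0, add_zero]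
  congr 1
  apply Multiset.filter_congr
  intro e _
  rw [Finset.union_inter_distrib_right]
  simp [Finset.Nonempty, Finset.mem_union, exists_or]

/-- If every vertex of `A` has degree less than `c * m`, every edge meets `A` in at most one
vertex, and `d(A) ≥ 2cm`, then `A` can be partitioned into three parts such that the union of
any two of the parts meets at least `c * m` edges. -/
theorem statement4 {V : Type*} [DecidableEq V] (c : ℝ) (hc : 0 < c)
    (G : Multiset (Finset V)) (hGne : ∀ e ∈ G, e.Nonempty)
    (m : ℕ) (hm : Multiset.card G = m)
    (A : Finset V)
    (hdeg : ∀ v ∈ A, (edgesMeeting G {v} : ℝ) < c * m)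
    (hone : ∀ e ∈ G, (A ∩ e).card ≤ 1)
    (hA : 2 * c * m ≤ (edgesMeeting G A : ℝ)) :
    ∃ A₁ A₂ A₃ : Finset V,
      A₁ ∪ A₂ ∪ A₃ = A ∧
      Disjoint A₁ A₂ ∧ Disjoint A₁ A₃ ∧ Disjoint A₂ A₃ ∧
      c * m ≤ (edgesMeeting G (A₁ ∪ A₂) : ℝ) ∧
      c * m ≤ (edgesMeeting G (A₁ ∪ A₃) : ℝ) ∧
      c * m ≤ (edgesMeeting G (A₂ ∪ A₃) : ℝ) := by
  rcases Nat.eq_zero_or_pos m with hm0 | hmpos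
  · subst hm0
    refine ⟨A, ∅, ∅, by simp, by simp, by simp, by simp, ?_, ?_, ?_⟩ <;>
      simp [Nat.cast_nonneg]
  have hcm : 0 < c * m := by positivity
  set S : ℝ := (edgesMeeting G A : ℝ) with hS
  -- choose B ⊆ A of maximal card with d(B) ≤ S - c*m
  set 𝒮 := A.powerset.filter (fun B => (edgesMeeting G B : ℝ) ≤ S - c * m) with h𝒮
  have hne : 𝒮.Nonempty := by
    refine ⟨∅, Finset.mem_filter.2 ⟨Finset.empty_mem_powerset A, ?_⟩⟩
    have : edgesMeeting G ∅ = 0 := by simp [edgesMeeting, Multiset.filter_eq_nil]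
    rw [this]
    push_cast
    linarith
  obtain ⟨B, hBmem, hBmax⟩ := Finset.exists_max_image 𝒮 Finset.card hne
  rw [h𝒮, Finset.mem_filter, Finset.mem_powerset] at hBmem
  obtain ⟨hBA, hBle⟩ := hBmem
  -- B ≠ A
  have hBne : B ≠ A := by
    rintro rfl
    linarith
  obtain ⟨v, hvA, hvB⟩ := Finset.exists_of_ssubset (hBA.ssubset_of_ne hBne)
  -- key additivity facts
  have hadd : ∀ C D : Finset V, Disjoint C D → C ⊆ A → D ⊆ A →
      edgesMeeting G (C ∪ D) = edgesMeeting G C + edgesMeeting G D :=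
    fun C D h1 h2 h3 => edgesMeeting_add G A C D h1 h2 h3 hone
  -- d(B ∪ {v}) > S - c*m by maximality
  have hBv : S - c * m < (edgesMeeting G (B ∪ {v}) : ℝ) := by
    by_contra h
    push_neg at h
    have hmem : B ∪ {v} ∈ 𝒮 := by
      rw [h𝒮, Finset.mem_filter, Finset.mem_powerset]
      exact ⟨Finset.union_subset hBA (by simpa using hvA), h⟩
    have hcard := hBmax _ hmem
    have : B.card < (B ∪ {v}).card := by
      have : B ⊂ B ∪ {v} := Finset.ssubset_iff_of_subset (Finset.subset_union_left) |>.2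
        ⟨v, Finset.mem_union_right _ (Finset.mem_singleton_self v), hvB⟩
      exact Finset.card_lt_card this
    omega
  refine ⟨B, {v}, A \ (B ∪ {v}), ?_, ?_, ?_, ?_, ?_, ?_, ?_⟩
  · rw [Finset.union_sdiff_of_subset (Finset.union_subset hBA (by simpa using hvA))]
  · simpa using hvB
  · exact Finset.disjoint_sdiff.mono_left Finset.subset_union_left
  · exact Finset.disjoint_sdiff.mono_left Finset.subset_union_right
  · linarith
  · -- B ∪ (A \ (B ∪ {v})) = A \ {v}, and d(A\{v}) = S - d({v}) > S - c*m ≥ c*m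
    have heq : B ∪ (A \ (B ∪ {v})) = A \ {v} := by
      ext x
      simp only [Finset.mem_union, Finset.mem_sdiff, Finset.mem_singleton]
      constructor
      · rintro (hx | ⟨hx, hnx⟩)
        · exact ⟨hBA hx, fun h => hvB (h ▸ hx)⟩
        · exact ⟨hx, fun h => hnx (Or.inr (by simp [h]))⟩
      · rintro ⟨hxA, hxv⟩
        by_cases hxB : x ∈ B
        · exact Or.inl hxB
        · exact Or.inr ⟨hxA, by simp [hxB, hxv]⟩
    rw [heq]
    have hsplit : edgesMeeting G ({v} ∪ (A \ {v})) = edgesMeeting G {v} + edgesMeeting G (A \ {v}) :=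
      hadd _ _ (Finset.disjoint_sdiff.mono_left (le_refl _)) (by simpa using hvA)
        (Finset.sdiff_subset)
    have hu : ({v} : Finset V) ∪ (A \ {v}) = A := by
      rw [Finset.union_sdiff_of_subset (by simpa using hvA)]
    rw [hu] at hsplit
    have hdv := hdeg v hvA
    have : (edgesMeeting G (A \ {v}) : ℝ) = S - (edgesMeeting G {v} : ℝ) := by
      rw [hS]; push_cast [hsplit]; ring
    rw [this]
    linarith
  · -- {v} ∪ (A \ (B ∪ {v})) = A \ B, d(A\B) = S - d(B) ≥ c*m
    have heq : ({v} : Finset V) ∪ (A \ (B ∪ {v})) = A \ B := by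
      ext x
      simp only [Finset.mem_union, Finset.mem_sdiff, Finset.mem_singleton]
      constructor
      · rintro (rfl | ⟨hx, hnx⟩)
        · exact ⟨hvA, hvB⟩
        · exact ⟨hx, fun h => hnx (Or.inl h)⟩
      · rintro ⟨hxA, hxB⟩
        by_cases hxv : x = v
        · exact Or.inl hxv
        · exact Or.inr ⟨hxA, by simp [hxB, hxv]⟩
    rw [heq]
    have hsplit : edgesMeeting G (B ∪ (A \ B)) = edgesMeeting G B + edgesMeeting G (A \ B) :=
      hadd _ _ Finset.disjoint_sdiff hBA Finset.sdiff_subset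
    rw [Finset.union_sdiff_of_subset hBA] at hsplit
    have : (edgesMeeting G (A \ B) : ℝ) = S - (edgesMeeting G B : ℝ) := by
      rw [hS]; push_cast [hsplit]; ring
    rw [this]
    linarith
end

section
/- Let G be an r-uniform multi-hypergraph on vertex set V with m edges, and let V₁, V₂, …, V_r be a partition of V into r parts such that the quantity Σᵢ d(Vᵢ) cannot be increased by moving any single vertex from its part into V_r. Then Σ_{i=1}^{r} d(Vᵢ) ≥ (r+1)m − r·d(V_r). -/
private lemma card_filter_eq_sum_map {α} (G : Multiset α) (p : α → Prop) [DecidablePred p] :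
    Multiset.card (G.filter p) = (G.map fun e => if p e then 1 else 0).sum := by
  induction G using Multiset.induction with
  | empty => simp
  | cons a s ih => by_cases h : p a <;> simp [Multiset.filter_cons, h, ih, Nat.add_comm]

private lemma sum_sum_map {α ι} (s : Finset ι) (G : Multiset α) (f : ι → α → ℕ) :
    ∑ i ∈ s, (G.map (f i)).sum = (G.map fun e => ∑ i ∈ s, f i e).sum := by
  induction G using Multiset.induction with
  | empty => simp
  | cons a t ih => simp [Finset.sum_add_distrib, ih]

private lemma sum_map_le' {α} (G : Multiset α) (f g : α → ℕ) (h : ∀ e ∈ G, f e ≤ g e) :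
    (G.map f).sum ≤ (G.map g).sum := by
  induction G using Multiset.induction with
  | empty => simp
  | cons a t ih =>
    simp only [Multiset.map_cons, Multiset.sum_cons]
    exact Nat.add_le_add (h a (by simp)) (ih fun e he => h e (by simp [he]))


/-- If `V₁, …, V_r` is a partition of the vertex set of an `r`-uniform multi-hypergraph
such that `∑ i, d(Vᵢ)` cannot be increased by moving a single vertex into the last part,
then `∑ i, d(Vᵢ) ≥ (r+1)m - r·d(V_r)`. -/
theorem statement5 {V : Type*} [Fintype V] [DecidableEq V] (r : ℕ) (hr : 0 < r)
    (G : Multiset (Finset V)) (hunif : ∀ e ∈ G, e.card = r)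
    (m : ℕ) (hm : Multiset.card G = m)
    (P : Fin r → Finset V) (hpart : ∀ v : V, ∃! i, v ∈ P i)
    (hlocal : ∀ i : Fin r, i ≠ ⟨r - 1, by omega⟩ → ∀ v ∈ P i,
      edgesMeeting G (P i \ {v}) + edgesMeeting G (P ⟨r - 1, by omega⟩ ∪ {v}) ≤
        edgesMeeting G (P i) + edgesMeeting G (P ⟨r - 1, by omega⟩)) :
    ((r : ℝ) + 1) * m - r * edgesMeeting G (P ⟨r - 1, by omega⟩) ≤
      ∑ i : Fin r, (edgesMeeting G (P i) : ℝ) := by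
  have hlt : r - 1 < r := by omega
  set last : Fin r := ⟨r - 1, hlt⟩ with hlastdef
  have hlocal' : ∀ i : Fin r, i ≠ last → ∀ v ∈ P i,
      edgesMeeting G (P i \ {v}) + edgesMeeting G (P last ∪ {v}) ≤
        edgesMeeting G (P i) + edgesMeeting G (P last) := fun i hi v hv => hlocal i hi v hv
  clear hlocal
  have hDm : ∀ A : Finset V, edgesMeeting G A
      = (G.map fun e => if (A ∩ e).Nonempty then 1 else 0).sum := fun A =>
    card_filter_eq_sum_map G _
  -- partition counting
  have hcard1 : ∀ v : V, (Finset.univ.filter fun i : Fin r => v ∈ P i).card = 1 := by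
    intro v
    obtain ⟨i, hi, hu⟩ := hpart v
    rw [Finset.card_eq_one]
    refine ⟨i, ?_⟩
    ext j
    simp only [Finset.mem_filter, Finset.mem_univ, true_and, Finset.mem_singleton]
    constructor
    · exact fun h => hu j h
    · rintro rfl; exact hi
  have hcount : ∀ e : Finset V, ∑ i : Fin r, (P i ∩ e).card = e.card := by
    intro e
    have h1 : ∀ i : Fin r, (P i ∩ e).card = ∑ v ∈ e, if v ∈ P i then 1 else 0 := by
      intro i
      rw [Finset.inter_comm, ← Finset.filter_mem_eq_inter, Finset.sum_boole, Nat.cast_id]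
    simp_rw [h1]
    rw [Finset.sum_comm]
    have h2 : ∀ v ∈ e, (∑ i : Fin r, if v ∈ P i then 1 else 0) = 1 := by
      intro v _
      rw [Finset.sum_boole, Nat.cast_id]
      exact hcard1 v
    rw [Finset.sum_congr rfl h2]
    simp
  -- indicator decompositions
  have hsplit_union : ∀ (A : Finset V) (v : V) (e : Finset V),
      (if ((A ∪ {v}) ∩ e).Nonempty then 1 else 0)
        = (if (A ∩ e).Nonempty then 1 else 0)
          + (if v ∈ e ∧ ¬(A ∩ e).Nonempty then (1:ℕ) else 0) := by
    intro A v e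
    have h : ((A ∪ {v}) ∩ e).Nonempty ↔ (A ∩ e).Nonempty ∨ v ∈ e := by
      simp only [Finset.Nonempty, Finset.mem_inter, Finset.mem_union, Finset.mem_singleton]
      constructor
      · rintro ⟨w, hw | rfl, hw2⟩
        · exact Or.inl ⟨w, hw, hw2⟩
        · exact Or.inr hw2
      · rintro (⟨w, hw1, hw2⟩ | hv)
        · exact ⟨w, Or.inl hw1, hw2⟩
        · exact ⟨v, Or.inr rfl, hv⟩
    by_cases h1 : (A ∩ e).Nonempty <;> by_cases h2 : v ∈ e <;> simp [h, h1, h2]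
  have hsplit_erase : ∀ (i : Fin r) (v : V), v ∈ P i → ∀ e : Finset V,
      (if (P i ∩ e).Nonempty then 1 else 0)
        = (if ((P i \ {v}) ∩ e).Nonempty then 1 else 0)
          + (if v ∈ e ∧ ¬((P i \ {v}) ∩ e).Nonempty then (1:ℕ) else 0) := by
    intro i v hv e
    by_cases h2 : v ∈ e
    · have h : (P i ∩ e).Nonempty := ⟨v, Finset.mem_inter.2 ⟨hv, h2⟩⟩
      by_cases h1 : ((P i \ {v}) ∩ e).Nonempty <;> simp [h, h1, h2]
    · have h : (P i \ {v}) ∩ e = P i ∩ e := by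
        ext w
        simp only [Finset.mem_inter, Finset.mem_sdiff, Finset.mem_singleton]
        constructor
        · rintro ⟨⟨hw, _⟩, hw2⟩; exact ⟨hw, hw2⟩
        · rintro ⟨hw, hw2⟩; exact ⟨⟨hw, fun hh => h2 (hh ▸ hw2)⟩, hw2⟩
      simp [h, h2]
  -- a v ≤ b v
  have hab : ∀ i : Fin r, i ≠ last → ∀ v ∈ P i,
      (G.map fun e => if v ∈ e ∧ ¬(P last ∩ e).Nonempty then 1 else 0).sum
        ≤ (G.map fun e => if v ∈ e ∧ ¬((P i \ {v}) ∩ e).Nonempty then 1 else 0).sum := by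
    intro i hi v hv
    have h1 : edgesMeeting G (P last ∪ {v})
        = edgesMeeting G (P last)
          + (G.map fun e => if v ∈ e ∧ ¬(P last ∩ e).Nonempty then 1 else 0).sum := by
      rw [hDm, hDm, ← Multiset.sum_map_add]
      exact congrArg _ (Multiset.map_congr rfl fun e _ => hsplit_union (P last) v e)
    have h2 : edgesMeeting G (P i)
        = edgesMeeting G (P i \ {v})
          + (G.map fun e => if v ∈ e ∧ ¬((P i \ {v}) ∩ e).Nonempty then 1 else 0).sum := by
      rw [hDm, hDm, ← Multiset.sum_map_add]
      exact congrArg _ (Multiset.map_congr rfl fun e _ => hsplit_erase i v hv e)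
    have h3 := hlocal' i hi v hv
    omega
  -- the count of edges missing the last part
  set m₀ := Multiset.card (G.filter fun e => ¬(P last ∩ e).Nonempty) with hm₀
  -- lower bound: r * m₀ ≤ ∑ s(e)
  have keyA : r * m₀
      ≤ (G.map fun e => ∑ i ∈ Finset.univ.erase last,
          if (P i ∩ e).card = 1 then 1 else 0).sum := by
    have hstep : ∑ i ∈ Finset.univ.erase last, ∑ v ∈ P i,
          (G.map fun e => if v ∈ e ∧ ¬(P last ∩ e).Nonempty then 1 else 0).sum
        ≤ ∑ i ∈ Finset.univ.erase last, ∑ v ∈ P i,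
          (G.map fun e => if v ∈ e ∧ ¬((P i \ {v}) ∩ e).Nonempty then 1 else 0).sum := by
      refine Finset.sum_le_sum fun i hi => Finset.sum_le_sum fun v hv => ?_
      exact hab i (Finset.ne_of_mem_erase hi) v hv
    -- compute LHS of hstep
    have hL : ∑ i ∈ Finset.univ.erase last, ∑ v ∈ P i,
          (G.map fun e => if v ∈ e ∧ ¬(P last ∩ e).Nonempty then 1 else 0).sum
        = r * m₀ := by
      have e1 : ∀ i : Fin r, ∑ v ∈ P i,
            (G.map fun e => if v ∈ e ∧ ¬(P last ∩ e).Nonempty then 1 else 0).sum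
          = (G.map fun e => ∑ v ∈ P i,
              if v ∈ e ∧ ¬(P last ∩ e).Nonempty then 1 else 0).sum := fun i =>
        sum_sum_map (P i) G _
      simp_rw [e1]
      rw [sum_sum_map]
      have e2 : ∀ e ∈ G, (∑ i ∈ Finset.univ.erase last, ∑ v ∈ P i,
            if v ∈ e ∧ ¬(P last ∩ e).Nonempty then 1 else 0)
          = if ¬(P last ∩ e).Nonempty then r else 0 := by
        intro e he
        by_cases h : (P last ∩ e).Nonempty
        · simp [h]
        · have e3 : ∀ i : Fin r, (∑ v ∈ P i,
              if v ∈ e ∧ ¬(P last ∩ e).Nonempty then (1:ℕ) else 0) = (P i ∩ e).card := by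
            intro i
            simp only [h, not_false_iff, and_true]
            rw [Finset.sum_boole, Nat.cast_id, Finset.filter_mem_eq_inter]
          simp_rw [e3]
          rw [if_pos h]
          have e4 : ∑ i ∈ Finset.univ.erase last, (P i ∩ e).card + (P last ∩ e).card
              = ∑ i : Fin r, (P i ∩ e).card :=
            Finset.sum_erase_add _ _ (Finset.mem_univ last)
          have e5 : (P last ∩ e).card = 0 :=
            Finset.card_eq_zero.2 (Finset.not_nonempty_iff_eq_empty.1 h)
          have e6 := hcount e
          have e7 := hunif e he
          omega
      rw [Multiset.map_congr rfl e2]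
      have e8 : (G.map fun e => if ¬(P last ∩ e).Nonempty then r else 0)
          = G.map fun e => r * (if ¬(P last ∩ e).Nonempty then 1 else 0) := by
        refine Multiset.map_congr rfl fun e _ => ?_
        by_cases h : (P last ∩ e).Nonempty <;> simp [h]
      rw [e8, hm₀, card_filter_eq_sum_map]
      exact Multiset.sum_map_mul_left
    -- compute RHS of hstep
    have hR : ∑ i ∈ Finset.univ.erase last, ∑ v ∈ P i,
          (G.map fun e => if v ∈ e ∧ ¬((P i \ {v}) ∩ e).Nonempty then 1 else 0).sum
        = (G.map fun e => ∑ i ∈ Finset.univ.erase last,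
            if (P i ∩ e).card = 1 then 1 else 0).sum := by
      have e1 : ∀ i : Fin r, ∑ v ∈ P i,
            (G.map fun e => if v ∈ e ∧ ¬((P i \ {v}) ∩ e).Nonempty then 1 else 0).sum
          = (G.map fun e => ∑ v ∈ P i,
              if v ∈ e ∧ ¬((P i \ {v}) ∩ e).Nonempty then 1 else 0).sum := fun i =>
        sum_sum_map (P i) G _
      simp_rw [e1]
      rw [sum_sum_map]
      refine congrArg _ (Multiset.map_congr rfl fun e _ => ?_)
      refine Finset.sum_congr rfl fun i _ => ?_
      -- per-part: ∑_{v ∈ P i} [P i ∩ e = {v}] = [card = 1]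
      have key : ∀ v ∈ P i, (v ∈ e ∧ ¬((P i \ {v}) ∩ e).Nonempty) ↔ P i ∩ e = {v} := by
        intro v hv
        rw [Finset.not_nonempty_iff_eq_empty]
        constructor
        · rintro ⟨h1, h2⟩
          ext w
          simp only [Finset.mem_inter, Finset.mem_singleton]
          constructor
          · rintro ⟨hw1, hw2⟩
            by_contra hne
            have hw : w ∈ (P i \ {v}) ∩ e := by
              simp only [Finset.mem_inter, Finset.mem_sdiff, Finset.mem_singleton]
              exact ⟨⟨hw1, hne⟩, hw2⟩
            rw [h2] at hw
            exact absurd hw (Finset.notMem_empty w)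
          · rintro rfl; exact ⟨hv, h1⟩
        · intro h
          have hv' : v ∈ P i ∩ e := by rw [h]; exact Finset.mem_singleton_self v
          refine ⟨(Finset.mem_inter.1 hv').2, ?_⟩
          ext w
          simp only [Finset.mem_inter, Finset.mem_sdiff, Finset.mem_singleton,
            Finset.notMem_empty, iff_false, not_and]
          rintro ⟨hw1, hne⟩ hw2
          have hw : w ∈ P i ∩ e := Finset.mem_inter.2 ⟨hw1, hw2⟩
          rw [h, Finset.mem_singleton] at hw
          exact hne hw
      rw [Finset.sum_congr rfl (fun v hv => if_congr (key v hv) rfl rfl), Finset.sum_boole, Nat.cast_id]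
      by_cases h : (P i ∩ e).card = 1
      · obtain ⟨a, ha⟩ := Finset.card_eq_one.1 h
        have haPi : a ∈ P i := (Finset.mem_inter.1 (ha ▸ Finset.mem_singleton_self a)).1
        rw [if_pos h]
        have : (P i).filter (fun v => P i ∩ e = {v}) = {a} := by
          ext w
          simp only [Finset.mem_filter, Finset.mem_singleton]
          constructor
          · rintro ⟨_, hw⟩
            have : ({a} : Finset V) = {w} := by rw [← ha, hw]
            exact (Finset.singleton_inj.1 this).symm
          · rintro rfl; exact ⟨haPi, ha⟩
        simp [this]
      · rw [if_neg h]
        have : (P i).filter (fun v => P i ∩ e = {v}) = ∅ := by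
          rw [Finset.filter_eq_empty_iff]
          intro v _ hv
          exact h (by rw [hv]; simp)
        simp [this]
    calc r * m₀ = _ := hL.symm
      _ ≤ _ := hstep
      _ = _ := hR
  -- ∑ t(e) and keyB
  have keyC : ∑ i : Fin r, edgesMeeting G (P i)
      = (G.map fun e => ∑ i : Fin r, if (P i ∩ e).Nonempty then 1 else 0).sum := by
    simp_rw [hDm]
    exact sum_sum_map Finset.univ G _
  have keyB : (G.map fun e => ∑ i ∈ Finset.univ.erase last,
        if (P i ∩ e).card = 1 then 1 else 0).sum + m
      ≤ ∑ i : Fin r, edgesMeeting G (P i) := by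
    rw [keyC]
    have hst : ∀ e ∈ G, (∑ i ∈ Finset.univ.erase last,
          if (P i ∩ e).card = 1 then 1 else 0) + 1
        ≤ ∑ i : Fin r, if (P i ∩ e).Nonempty then 1 else 0 := by
      intro e he
      rw [Finset.sum_boole, Finset.sum_boole]
      simp only [Nat.cast_id]
      set S := (Finset.univ.erase last).filter (fun i => (P i ∩ e).card = 1) with hS
      set T := Finset.univ.filter (fun i : Fin r => (P i ∩ e).Nonempty) with hT
      have hST : S ⊆ T := by
        intro i hi
        simp only [hS, Finset.mem_filter, Finset.mem_erase] at hi
        simp only [hT, Finset.mem_filter, Finset.mem_univ, true_and]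
        exact Finset.card_pos.1 (by omega)
      have hlt2 : S.card < T.card := by
        by_cases hme : (P last ∩ e).Nonempty
        · apply Finset.card_lt_card
          refine ⟨hST, fun hTS => ?_⟩
          have hin : last ∈ S := hTS (by simp [hT, hme])
          simp [hS, Finset.mem_erase] at hin
        · rcases (Finset.card_le_card hST).lt_or_eq with h | h
          · exact h
          · exfalso
            have hSeqT : S = T := Finset.eq_of_subset_of_card_le hST h.ge
            have hTsub : T ⊆ Finset.univ.erase last := by
              intro i hi
              simp only [hT, Finset.mem_filter, Finset.mem_univ, true_and] at hi
              simp only [Finset.mem_erase, Finset.mem_univ, and_true]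
              rintro rfl; exact hme hi
            have h0 : ∀ i ∈ Finset.univ, i ∉ T → (P i ∩ e).card = 0 := by
              intro i _ hi
              simp only [hT, Finset.mem_filter, Finset.mem_univ, true_and] at hi
              exact Finset.card_eq_zero.2 (Finset.not_nonempty_iff_eq_empty.1 hi)
            have hsum : e.card = ∑ i ∈ T, (P i ∩ e).card := by
              rw [← hcount e]
              exact (Finset.sum_subset (Finset.subset_univ T) h0).symm
            have h1 : ∀ i ∈ T, (P i ∩ e).card = 1 := by
              intro i hi
              rw [← hSeqT] at hi
              simp only [hS, Finset.mem_filter] at hi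
              exact hi.2
            rw [Finset.sum_congr rfl h1, Finset.sum_const, smul_eq_mul, mul_one] at hsum
            have hTle : T.card ≤ r - 1 := by
              have hc := Finset.card_le_card hTsub
              rwa [Finset.card_erase_of_mem (Finset.mem_univ last), Finset.card_univ,
                Fintype.card_fin] at hc
            rw [hunif e he] at hsum
            omega
      omega
    calc (G.map fun e => ∑ i ∈ Finset.univ.erase last,
          if (P i ∩ e).card = 1 then 1 else 0).sum + m
        = (G.map fun e => (∑ i ∈ Finset.univ.erase last,
            if (P i ∩ e).card = 1 then 1 else 0) + 1).sum := by
          rw [Multiset.sum_map_add]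
          simp [hm]
      _ ≤ _ := sum_map_le' G _ _ hst
  -- card split
  have keyD : edgesMeeting G (P last) + m₀ = m := by
    rw [← hm, edgesMeeting, hm₀]
    rw [← Multiset.countP_eq_card_filter, ← Multiset.countP_eq_card_filter]
    exact (Multiset.card_eq_countP_add_countP _ _).symm
  -- conclude over ℝ
  have hmain : m + r * m₀ ≤ ∑ i : Fin r, edgesMeeting G (P i) := by omega
  have hcast : ((∑ i : Fin r, edgesMeeting G (P i) : ℕ) : ℝ)
      = ∑ i : Fin r, (edgesMeeting G (P i) : ℝ) := by push_cast; rfl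
  have h1 : ((m : ℝ) + r * m₀) ≤ ∑ i : Fin r, (edgesMeeting G (P i) : ℝ) := by
    rw [← hcast]
    exact_mod_cast hmain
  have h2 : (m : ℝ) = edgesMeeting G (P last) + m₀ := by exact_mod_cast keyD.symm
  have hgoal : ((r : ℝ) + 1) * m - r * edgesMeeting G (P last)
      ≤ ∑ i : Fin r, (edgesMeeting G (P i) : ℝ) := by nlinarith [h1, h2]
  exact hgoal
end

section
/- Let 1/3 ≤ c ≤ 1/2. Suppose we have a finite, non-empty collection of real numbers in [0,1] whose arithmetic mean a satisfies a ≥ max(2c, 2/3 + c/6). If j of the numbers are at least 2c, k of them are at least c/2 but less than c, l of them are less than c/2, and the rest are at least c but less than 2c, then j ≥ k + 2l. -/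
open scoped Classical

lemma sum_lt_card_mul_aux (b : ℝ) (s : Multiset ℝ) (hs : s ≠ 0) (h : ∀ x ∈ s, x < b) :
    s.sum < (Multiset.card s : ℝ) * b := by
  induction s using Multiset.induction with
  | empty => simp at hs
  | cons a t ih =>
    rcases eq_or_ne t 0 with rfl | ht
    · simpa using h a (by simp)
    · have h2 := ih ht (fun x hx => h x (by simp [hx]))
      have ha := h a (by simp)
      simp only [Multiset.sum_cons, Multiset.card_cons]
      push_cast
      linarith

lemma sum_le_card_mul_aux (b : ℝ) (s : Multiset ℝ) (h : ∀ x ∈ s, x ≤ b) :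
    s.sum ≤ (Multiset.card s : ℝ) * b := by
  have := Multiset.sum_le_card_nsmul s b h
  simpa [nsmul_eq_mul] using this

/-- Let `1/3 ≤ c ≤ 1/2` and let `s` be a finite non-empty multiset of numbers in `[0,1]` whose
arithmetic mean is at least `max (2c) (2/3 + c/6)`.  If `j` of the numbers are at least `2c`,
`k` are in `[c/2, c)` and `l` are below `c/2`, then `j ≥ k + 2l`. -/
theorem statement12 (c : ℝ) (hc₁ : 1 / 3 ≤ c) (hc₂ : c ≤ 1 / 2)
    (s : Multiset ℝ) (hs : s ≠ 0) (hmem : ∀ x ∈ s, 0 ≤ x ∧ x ≤ 1)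
    (hmean : max (2 * c) (2 / 3 + c / 6) ≤ s.sum / (Multiset.card s : ℝ)) :
    Multiset.card (s.filter fun x => c / 2 ≤ x ∧ x < c) +
      2 * Multiset.card (s.filter fun x => x < c / 2) ≤
    Multiset.card (s.filter fun x => 2 * c ≤ x) := by
  set s1 := s.filter (fun x => 2 * c ≤ x) with hs1
  set s2 := s.filter (fun x => c ≤ x ∧ x < 2 * c) with hs2
  set s3 := s.filter (fun x => c / 2 ≤ x ∧ x < c) with hs3
  set s4 := s.filter (fun x => x < c / 2) with hs4
  have hc0 : (0:ℝ) < c := by linarith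
  have hsplit : s = s1 + s2 + s3 + s4 := by
    rw [hs1, hs2, hs3, hs4]
    ext a
    simp only [Multiset.count_add, Multiset.count_filter]
    rcases lt_or_ge a (c / 2) with h | h
    · have h1 : ¬ (2 * c ≤ a) := not_le.mpr (by linarith)
      have h2 : ¬ (c ≤ a ∧ a < 2 * c) := by rintro ⟨h', -⟩; linarith
      have h3 : ¬ (c / 2 ≤ a ∧ a < c) := by rintro ⟨h', -⟩; linarith
      simp [h1, h2, h3, h]
    rcases lt_or_ge a c with h' | h'
    · have h1 : ¬ (2 * c ≤ a) := not_le.mpr (by linarith)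
      have h2 : ¬ (c ≤ a ∧ a < 2 * c) := by rintro ⟨h'', -⟩; linarith
      have h4 : ¬ (a < c / 2) := not_lt.mpr h
      simp [h1, h2, h4, h, h']
    rcases lt_or_ge a (2 * c) with h'' | h''
    · have h1 : ¬ (2 * c ≤ a) := not_le.mpr h''
      have h3 : ¬ (c / 2 ≤ a ∧ a < c) := by rintro ⟨-, h3⟩; linarith
      have h4 : ¬ (a < c / 2) := not_lt.mpr (by linarith)
      simp [h1, h3, h4, h', h'']
    · have h2 : ¬ (c ≤ a ∧ a < 2 * c) := by rintro ⟨-, h2⟩; linarith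
      have h3 : ¬ (c / 2 ≤ a ∧ a < c) := by rintro ⟨-, h3⟩; linarith
      have h4 : ¬ (a < c / 2) := not_lt.mpr (by linarith)
      simp [h2, h3, h4, h'']
  -- notation for cardinalities (as reals)
  set j : ℕ := Multiset.card s1
  set m : ℕ := Multiset.card s2
  set k : ℕ := Multiset.card s3
  set l : ℕ := Multiset.card s4
  have hcard : Multiset.card s = j + m + k + l := by
    rw [hsplit]; simp [add_assoc]; rfl
  have hsum : s.sum = s1.sum + s2.sum + s3.sum + s4.sum := by
    rw [hsplit]; simp [add_assoc]
  -- bounds on partial sums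
  have hb1 : s1.sum ≤ (j : ℝ) * 1 :=
    sum_le_card_mul_aux 1 s1 (fun x hx => (hmem x (Multiset.mem_of_mem_filter hx)).2)
  have hb2 : s2.sum ≤ (m : ℝ) * (2 * c) :=
    sum_le_card_mul_aux (2 * c) s2
      (fun x hx => le_of_lt (Multiset.of_mem_filter hx).2)
  have hb3 : s3.sum ≤ (k : ℝ) * c :=
    sum_le_card_mul_aux c s3 (fun x hx => le_of_lt (Multiset.of_mem_filter hx).2)
  have hb4 : s4.sum ≤ (l : ℝ) * (c / 2) :=
    sum_le_card_mul_aux (c / 2) s4 (fun x hx => le_of_lt (Multiset.of_mem_filter (p := fun y => y < c / 2) hx))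
  set A : ℝ := max (2 * c) (2 / 3 + c / 6) with hA
  have hA1 : 2 * c ≤ A := le_max_left _ _
  have hA2 : 2 / 3 + c / 6 ≤ A := le_max_right _ _
  have hAle1 : A ≤ 1 := max_le (by linarith) (by linarith)
  have hn : 0 < Multiset.card s := Multiset.card_pos.mpr hs
  have hnR : (0:ℝ) < (Multiset.card s : ℝ) := by exact_mod_cast hn
  have hnA : (Multiset.card s : ℝ) * A ≤ s.sum := by
    rw [mul_comm]
    exact (le_div_iff₀ hnR).mp hmean
  have hcardR : (Multiset.card s : ℝ) = (j : ℝ) + m + k + l := by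
    rw [hcard]; push_cast; ring
  -- trivial case
  by_cases hkl : k = 0 ∧ l = 0
  · simp [hkl.1, hkl.2]
  -- strict bound on s3.sum + s4.sum
  have hstrict : s3.sum + s4.sum < (k : ℝ) * c + (l : ℝ) * (c / 2) := by
    rcases Nat.eq_zero_or_pos k with hk0 | hk0
    · have hl0 : l ≠ 0 := fun h => hkl ⟨hk0, h⟩
      have hs4ne : s4 ≠ 0 := by
        intro h
        exact hl0 (Multiset.card_eq_zero.mpr h)
      have : s4.sum < (Multiset.card s4 : ℝ) * (c / 2) := sum_lt_card_mul_aux (c / 2) s4 hs4ne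
        (fun x hx => Multiset.of_mem_filter (p := fun y => y < c / 2) hx)
      linarith
    · have hs3ne : s3 ≠ 0 := by
        intro h
        have : k = 0 := Multiset.card_eq_zero.mpr h
        omega
      have := sum_lt_card_mul_aux c s3 hs3ne
        (fun x hx => (Multiset.of_mem_filter hx).2)
      linarith
  -- main inequality
  by_contra hcon
  push_neg at hcon
  have hcon' : (j : ℝ) + 1 ≤ (k : ℝ) + 2 * l := by exact_mod_cast hcon
  have hjR : (0:ℝ) ≤ (j : ℝ) := Nat.cast_nonneg j
  have hmR : (0:ℝ) ≤ (m : ℝ) := Nat.cast_nonneg m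
  have hkR : (0:ℝ) ≤ (k : ℝ) := Nat.cast_nonneg k
  have hlR : (0:ℝ) ≤ (l : ℝ) := Nat.cast_nonneg l
  -- n*A ≤ sum < j*1 + m*2c + k*c + l*c/2
  have hkey : ((j : ℝ) + m + k + l) * A < (j : ℝ) * 1 + (m : ℝ) * (2 * c) + (k : ℝ) * c + (l : ℝ) * (c / 2) := by
    rw [← hcardR]
    calc (Multiset.card s : ℝ) * A ≤ s.sum := hnA
      _ = s1.sum + s2.sum + s3.sum + s4.sum := hsum
      _ < (j : ℝ) * 1 + (m : ℝ) * (2 * c) + (k : ℝ) * c + (l : ℝ) * (c / 2) := by linarith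
  nlinarith [mul_nonneg hmR (by linarith : (0:ℝ) ≤ A - 2 * c),
    mul_nonneg hkR (by linarith : (0:ℝ) ≤ 2 * A - 1 - c),
    mul_nonneg hlR (by linarith : (0:ℝ) ≤ 3 * A - 2 - c / 2),
    mul_nonneg (by linarith : (0:ℝ) ≤ (k : ℝ) + 2 * l - 1 - j) (by linarith : (0:ℝ) ≤ 1 - A)]
end

section
/- Let G be an r-uniform multi-hypergraph on vertex set V with m edges and let V₁, V₂, …, V_r be any partition of V into r parts. Then Σ_{i=1}^{r−1} |{e : |e ∩ Vᵢ| = 1}| ≤ Σ_{i=1}^{r} d(Vᵢ) − m, where edges are counted with multiplicity. -/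
/-- The number of edges of `G` (counted with multiplicity) that meet `A` in exactly
one vertex. -/
def edgesMeetingOnce {V : Type*} [DecidableEq V] (G : Multiset (Finset V)) (A : Finset V) : ℕ :=
  Multiset.card (G.filter fun e => (A ∩ e).card = 1)

lemma sum_parts_card {V : Type*} [Fintype V] [DecidableEq V] {r : ℕ}
    (P : Fin r → Finset V) (hpart : ∀ v : V, ∃! i, v ∈ P i) (e : Finset V) :
    ∑ i : Fin r, (P i ∩ e).card = e.card := by
  have h : ∀ i : Fin r, (P i ∩ e).card = ∑ v ∈ e, if v ∈ P i then 1 else 0 := by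
    intro i
    rw [Finset.inter_comm, ← Finset.filter_mem_eq_inter, Finset.card_filter]
  simp only [h]
  rw [Finset.sum_comm]
  have h2 : ∀ v ∈ e, (∑ i : Fin r, if v ∈ P i then 1 else 0) = 1 := by
    intro v _
    obtain ⟨i, hi, huniq⟩ := hpart v
    rw [← Finset.card_filter]
    rw [Finset.card_eq_one]
    refine ⟨i, ?_⟩
    ext j
    simp only [Finset.mem_filter, Finset.mem_univ, true_and, Finset.mem_singleton]
    exact ⟨fun hj => huniq j hj, fun hj => hj ▸ hi⟩
  rw [Finset.sum_congr rfl h2]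
  simp

lemma edge_key {V : Type*} [Fintype V] [DecidableEq V] {r : ℕ} (hr : 0 < r)
    (P : Fin r → Finset V) (hpart : ∀ v : V, ∃! i, v ∈ P i) (e : Finset V)
    (he : e.card = r) :
    (Finset.univ.filter (fun i : Fin r => (i : ℕ) < r - 1 ∧ (P i ∩ e).card = 1)).card + 1
      ≤ (Finset.univ.filter (fun i : Fin r => (P i ∩ e).Nonempty)).card := by
  set T := Finset.univ.filter (fun i : Fin r => (i : ℕ) < r - 1 ∧ (P i ∩ e).card = 1) with hT
  set S := Finset.univ.filter (fun i : Fin r => (P i ∩ e).Nonempty) with hS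
  have hTS : T ⊆ S := by
    intro i hi
    simp only [hT, hS, Finset.mem_filter, Finset.mem_univ, true_and] at *
    rw [← Finset.card_pos]
    omega
  by_contra hcon
  push_neg at hcon
  have hcard : S.card ≤ T.card := by omega
  have hEq : T = S := Finset.eq_of_subset_of_card_le hTS hcard
  -- compute e.card
  have hsum := sum_parts_card P hpart e
  rw [← Finset.sum_filter_add_sum_filter_not Finset.univ
    (fun i : Fin r => (P i ∩ e).Nonempty) (fun i => (P i ∩ e).card)] at hsum
  have hz : ∑ i ∈ Finset.univ.filter (fun i : Fin r => ¬(P i ∩ e).Nonempty),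
      (P i ∩ e).card = 0 := by
    apply Finset.sum_eq_zero
    intro i hi
    simp only [Finset.mem_filter, Finset.not_nonempty_iff_eq_empty] at hi
    rw [hi.2]; rfl
  have hone : ∑ i ∈ S, (P i ∩ e).card = S.card := by
    rw [← hEq]
    rw [Finset.sum_congr rfl (fun i hi => by
      simp only [hT, Finset.mem_filter] at hi; exact hi.2.2)]
    simp
  rw [hz, add_zero] at hsum
  rw [← hS] at hsum
  rw [hone, he] at hsum
  -- S.card = r, but T = S and T.card ≤ r - 1
  have hTle : T.card ≤ r - 1 := by
    have : T.card ≤ (Finset.range (r - 1)).card := by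
      refine Finset.card_le_card_of_injOn (fun i => (i : ℕ)) ?_ ?_
      · intro i hi
        rw [Finset.mem_coe] at hi
        simp only [hT, Finset.mem_filter] at hi
        exact Finset.mem_range.mpr hi.2.1
      · intro a _ b _ hab
        exact Fin.val_injective hab
    simpa using this
  rw [← hEq] at hsum
  omega

lemma edgesMeeting_cons {V : Type*} [DecidableEq V] (G : Multiset (Finset V))
    (a : Finset V) (A : Finset V) :
    edgesMeeting (a ::ₘ G) A = (if (A ∩ a).Nonempty then 1 else 0) + edgesMeeting G A := by
  simp only [edgesMeeting, Multiset.filter_cons]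
  split <;> simp [add_comm]

lemma edgesMeetingOnce_cons {V : Type*} [DecidableEq V] (G : Multiset (Finset V))
    (a : Finset V) (A : Finset V) :
    edgesMeetingOnce (a ::ₘ G) A = (if (A ∩ a).card = 1 then 1 else 0) + edgesMeetingOnce G A := by
  simp only [edgesMeetingOnce, Multiset.filter_cons]
  split <;> simp [add_comm]

lemma main_nat {V : Type*} [Fintype V] [DecidableEq V] {r : ℕ} (hr : 0 < r)
    (P : Fin r → Finset V) (hpart : ∀ v : V, ∃! i, v ∈ P i)
    (G : Multiset (Finset V)) (hunif : ∀ e ∈ G, e.card = r) :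
    (∑ i ∈ Finset.univ.filter (fun i : Fin r => (i : ℕ) < r - 1),
        edgesMeetingOnce G (P i)) + Multiset.card G
      ≤ ∑ i : Fin r, edgesMeeting G (P i) := by
  induction G using Multiset.induction with
  | empty => simp [edgesMeeting, edgesMeetingOnce]
  | cons a G ih =>
    have ha : a.card = r := hunif a (Multiset.mem_cons_self a G)
    have hG : ∀ e ∈ G, e.card = r := fun e he => hunif e (Multiset.mem_cons_of_mem he)
    simp only [edgesMeeting_cons, edgesMeetingOnce_cons, Finset.sum_add_distrib,
      Multiset.card_cons]
    have h1 : ∑ i ∈ Finset.univ.filter (fun i : Fin r => (i : ℕ) < r - 1),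
        (if (P i ∩ a).card = 1 then 1 else 0) =
        (Finset.univ.filter (fun i : Fin r => (i : ℕ) < r - 1 ∧ (P i ∩ a).card = 1)).card := by
      rw [Finset.card_filter]
      rw [Finset.sum_filter]
      apply Finset.sum_congr rfl
      intro i _
      by_cases h : (i : ℕ) < r - 1 <;> simp [h]
    have h2 : ∑ i : Fin r, (if (P i ∩ a).Nonempty then 1 else 0) =
        (Finset.univ.filter (fun i : Fin r => (P i ∩ a).Nonempty)).card := by
      rw [Finset.card_filter]
    have hkey := edge_key hr P hpart a ha
    have hih := ih hG
    omega

/-- If `V₁, …, V_r` is any partition of the vertex set of an `r`-uniform multi-hypergraph,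
then `∑_{i=1}^{r-1} |{e : |e ∩ Vᵢ| = 1}| ≤ ∑_{i=1}^{r} d(Vᵢ) - m`. -/
theorem statement15 {V : Type*} [Fintype V] [DecidableEq V] (r : ℕ) (hr : 0 < r)
    (G : Multiset (Finset V)) (hunif : ∀ e ∈ G, e.card = r)
    (m : ℕ) (hm : Multiset.card G = m)
    (P : Fin r → Finset V) (hpart : ∀ v : V, ∃! i, v ∈ P i) :
    ∑ i ∈ Finset.univ.filter (fun i : Fin r => (i : ℕ) < r - 1),
        (edgesMeetingOnce G (P i) : ℝ) ≤
      (∑ i : Fin r, (edgesMeeting G (P i) : ℝ)) - m := by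
  have h := main_nat hr P hpart G hunif
  rw [hm] at h
  have h' : ((∑ i ∈ Finset.univ.filter (fun i : Fin r => (i : ℕ) < r - 1),
      edgesMeetingOnce G (P i)) + m : ℝ) ≤ (∑ i : Fin r, (edgesMeeting G (P i) : ℕ) : ℝ) := by
    exact_mod_cast h
  push_cast at h' ⊢
  linarith
end

section
/- Let r ≥ 3, let c, c′ > 0 be constants with c′ ≥ c, and let G be an r-uniform multi-hypergraph with m edges containing a vertex v of degree at least cm. Suppose that every (r−1)-uniform multi-hypergraph with m edges admits a partition of its vertex set into r−1 parts each meeting at least c′·m edges. Then G admits a partition of its vertex set into r parts each meeting at least cm edges. -/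
/-- Induction step: let `r ≥ 3`, `c' ≥ c > 0`, and let `G` be an `r`-uniform
multi-hypergraph with `m` edges having a vertex `v` of degree at least `c m`.  If every
`(r-1)`-uniform multi-hypergraph (on the same vertex set) with `m` edges admits a partition
into `r-1` parts each meeting at least `c' m` edges, then `G` admits a partition of its
vertex set into `r` parts each meeting at least `c m` edges. -/
theorem statement16 (r : ℕ) (hr : 3 ≤ r) (c c' : ℝ) (hc : 0 < c) (hc' : 0 < c')
    (hcc' : c ≤ c') {V : Type*} [Fintype V] [DecidableEq V]
    (G : Multiset (Finset V)) (hunif : ∀ e ∈ G, e.card = r)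
    (m : ℕ) (hm : Multiset.card G = m)
    (v : V) (hv : c * m ≤ (edgesMeeting G {v} : ℝ))
    (hind : ∀ H : Multiset (Finset V), (∀ e ∈ H, e.card = r - 1) →
      Multiset.card H = m →
      ∃ Q : Fin (r - 1) → Finset V, (∀ w : V, ∃! i, w ∈ Q i) ∧
        ∀ i : Fin (r - 1), c' * m ≤ (edgesMeeting H (Q i) : ℝ)) :
    ∃ P : Fin r → Finset V, (∀ w : V, ∃! i, w ∈ P i) ∧
      ∀ i : Fin r, c * m ≤ (edgesMeeting G (P i) : ℝ) := by
  classical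
  -- replace each edge by a subedge of size r-1 avoiding v
  set f : Finset V → Finset V := fun e =>
    if v ∈ e then e.erase v
    else if h2 : e.Nonempty then e.erase h2.choose else e with hf
  have hfsub : ∀ e, f e ⊆ e := by
    intro e
    simp only [hf]
    split_ifs <;> first | exact Finset.erase_subset _ _ | exact fun _ h => h
  have hfv : ∀ e ∈ G, v ∉ f e := by
    intro e he
    have hcard : e.card = r := hunif e he
    have hne : e.Nonempty := Finset.card_pos.mp (by omega)
    by_cases hv' : v ∈ e
    · simp [hf, hv']
    · intro hmem
      exact hv' (hfsub e hmem)
  have hfcard : ∀ e ∈ G, (f e).card = r - 1 := by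
    intro e he
    have hcard : e.card = r := hunif e he
    have hne : e.Nonempty := Finset.card_pos.mp (by omega)
    by_cases hv' : v ∈ e
    · simp [hf, hv', Finset.card_erase_of_mem hv', hcard]
    · simp [hf, hv', hne, Finset.card_erase_of_mem hne.choose_spec, hcard]
  set H : Multiset (Finset V) := G.map f with hH
  obtain ⟨Q, hQpart, hQbound⟩ := hind H
    (by
      intro e he
      rw [hH, Multiset.mem_map] at he
      obtain ⟨e', he', rfl⟩ := he
      exact hfcard e' he')
    (by simp [hH, hm])
  -- key: edges of H met by A are at most edges of G met by A.erase v
  have key : ∀ A : Finset V, (edgesMeeting H A : ℝ) ≤ edgesMeeting G (A.erase v) := by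
    intro A
    have : edgesMeeting H A ≤ edgesMeeting G (A.erase v) := by
      unfold edgesMeeting
      rw [hH, Multiset.filter_map, Multiset.card_map]
      apply Multiset.card_le_card
      rw [Multiset.le_iff_count]
      intro e
      rw [Multiset.count_filter, Multiset.count_filter]
      by_cases he : e ∈ G
      · split_ifs with h1 h2
        · rfl
        · exfalso
          obtain ⟨w, hw⟩ := h1
          simp only [Function.comp, Finset.mem_inter] at hw
          exact h2 ⟨w, Finset.mem_inter.mpr ⟨Finset.mem_erase.mpr
            ⟨fun hwv => hfv e he (hwv ▸ hw.2), hw.1⟩, hfsub e hw.2⟩⟩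
        · exact Nat.zero_le _
        · rfl
      · have : Multiset.count e G = 0 := Multiset.count_eq_zero.mpr he
        simp [this]
    exact_mod_cast this
  -- build the partition
  have hr1 : r - 1 < r := by omega
  refine ⟨fun i => if h : (i : ℕ) < r - 1 then (Q ⟨i, h⟩).erase v else {v}, ?_, ?_⟩
  · intro w
    by_cases hw : w = v
    · refine ⟨⟨r - 1, hr1⟩, ?_, ?_⟩
      · simp [hw]
      · intro j hj
        by_cases hj' : (j : ℕ) < r - 1
        · simp only [dif_pos hj'] at hj
          exact absurd (Finset.mem_erase.mp hj).1 (by simp [hw])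
        · have := j.isLt
          apply Fin.ext
          simp only [Fin.val_mk]
          omega
    · obtain ⟨i, hi, hiu⟩ := hQpart w
      refine ⟨⟨i, lt_trans i.isLt hr1⟩, ?_, ?_⟩
      · simp only [dif_pos i.isLt]
        exact Finset.mem_erase.mpr ⟨hw, hi⟩
      · intro j hj
        by_cases hj' : (j : ℕ) < r - 1
        · simp only [dif_pos hj'] at hj
          have := hiu ⟨j, hj'⟩ (Finset.mem_erase.mp hj).2
          exact Fin.ext (by simpa using congrArg Fin.val this)
        · simp only [dif_neg hj', Finset.mem_singleton] at hj
          exact absurd hj hw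
  · intro i
    by_cases hi : (i : ℕ) < r - 1
    · simp only [dif_pos hi]
      calc c * m ≤ c' * m := by
            apply mul_le_mul_of_nonneg_right hcc' (Nat.cast_nonneg m)
        _ ≤ edgesMeeting H (Q ⟨i, hi⟩) := hQbound _
        _ ≤ edgesMeeting G ((Q ⟨i, hi⟩).erase v) := key _
    · simp only [dif_neg hi]
      calc c * m ≤ edgesMeeting G {v} := hv
        _ = edgesMeeting G (Finset.erase {v} v ∪ {v}) := by simp
        _ ≤ _ := by simp
end

section
/- Let G be an r-uniform multi-hypergraph with m edges, r ≥ 4, and let c = r/(3r−4). If V₁, …, V_r is a partition of the vertex set for which Σᵢ d(Vᵢ) is as large as possible, ordered so that d(V₁) ≥ ⋯ ≥ d(V_r), and if d(V_r) < c·m/2, then (1/r)·Σ_{i=1}^{r} d(Vᵢ)/m > (r+1)/r − c/2 ≥ max(2c, 2/3 + c/6). -/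
/-- Double counting: summing cardinalities of filters over an index set equals
summing, over the multiset, the number of indices satisfying the predicate. -/
lemma swap_sum {α ι : Type*} [Fintype ι] (G : Multiset α) (p : ι → α → Prop)
    [∀ i, DecidablePred (p i)] [∀ a : α, DecidablePred (fun i => p i a)] :
    ∑ i : ι, Multiset.card (G.filter (p i))
      = (G.map fun a => (Finset.univ.filter fun i => p i a).card).sum := by
  induction G using Multiset.induction with
  | empty => simp
  | cons a G ih =>
    have h1 : ∀ i : ι, Multiset.card ((a ::ₘ G).filter (p i))
        = (if p i a then 1 else 0) + Multiset.card (G.filter (p i)) := by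
      intro i
      rw [Multiset.filter_cons, Multiset.card_add]
      congr 1
      split <;> simp
    simp only [h1, Finset.sum_add_distrib, ih, Multiset.map_cons, Multiset.sum_cons]
    rw [Finset.card_filter]

lemma sum_map_ite {α : Type*} (G : Multiset α) (C : α → Prop) [DecidablePred C] (n : ℕ) :
    (G.map fun a => if C a then n else 0).sum = n * Multiset.card (G.filter C) := by
  induction G using Multiset.induction with
  | empty => simp
  | cons a G ih =>
    rw [Multiset.map_cons, Multiset.sum_cons, ih, Multiset.filter_cons, Multiset.card_add]
    split <;> simp <;> ring

lemma card_filter_split {α : Type*} (G : Multiset α) (p q : α → Prop)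
    [DecidablePred p] [DecidablePred q] :
    Multiset.card (G.filter p)
      = Multiset.card (G.filter fun a => p a ∧ q a)
        + Multiset.card (G.filter fun a => p a ∧ ¬ q a) := by
  induction G using Multiset.induction with
  | empty => simp
  | cons a G ih =>
    rw [Multiset.filter_cons, Multiset.filter_cons, Multiset.filter_cons,
      Multiset.card_add, Multiset.card_add, Multiset.card_add, ih]
    by_cases hp : p a <;> by_cases hq : q a <;> simp [hp, hq] <;> omega

lemma card_filter_mono {α : Type*} (G : Multiset α) (p q : α → Prop)
    [DecidablePred p] [DecidablePred q] (h : ∀ a ∈ G, p a → q a) :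
    Multiset.card (G.filter p) ≤ Multiset.card (G.filter q) := by
  induction G using Multiset.induction with
  | empty => simp
  | cons a G ih =>
    rw [Multiset.filter_cons, Multiset.filter_cons, Multiset.card_add, Multiset.card_add]
    have ih' := ih (fun a ha => h a (Multiset.mem_cons_of_mem ha))
    by_cases hp : p a
    · have hq : q a := h a (Multiset.mem_cons_self a G) hp
      simp [hp, hq]; omega
    · by_cases hq : q a <;> simp [hp, hq] <;> omega

/-- Let `r ≥ 4`, `c = r/(3r-4)`, and let `V₁, …, V_r` be a partition of the vertex set of an
`r`-uniform multi-hypergraph maximising `∑ i, d(Vᵢ)`, ordered with `d(V₁) ≥ ⋯ ≥ d(V_r)`.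
If `d(V_r) < c m / 2`, then
`(1/r) ∑ i, d(Vᵢ)/m > (r+1)/r - c/2 ≥ max (2c) (2/3 + c/6)`. -/
theorem statement18 (r : ℕ) (hr : 4 ≤ r) {V : Type*} [Fintype V] [DecidableEq V]
    (G : Multiset (Finset V)) (hunif : ∀ e ∈ G, e.card = r)
    (m : ℕ) (hm : Multiset.card G = m)
    (c : ℝ) (hc : c = (r : ℝ) / (3 * r - 4))
    (P : Fin r → Finset V) (hpart : ∀ v : V, ∃! i, v ∈ P i)
    (hmax : ∀ Q : Fin r → Finset V, (∀ v : V, ∃! i, v ∈ Q i) →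
      ∑ i : Fin r, edgesMeeting G (Q i) ≤ ∑ i : Fin r, edgesMeeting G (P i))
    (horder : ∀ i j : Fin r, i ≤ j → edgesMeeting G (P j) ≤ edgesMeeting G (P i))
    (hVr : (edgesMeeting G (P ⟨r - 1, by omega⟩) : ℝ) < c * m / 2) :
    ((r : ℝ) + 1) / r - c / 2 < (1 / r) * ((∑ i : Fin r, (edgesMeeting G (P i) : ℝ)) / m) ∧
      max (2 * c) (2 / 3 + c / 6) ≤ ((r : ℝ) + 1) / r - c / 2 := by
  classical
  set last : Fin r := ⟨r - 1, by omega⟩ with hlast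
  -- the unique part of a vertex
  let pt : V → Fin r := fun v => (hpart v).choose
  have hpt : ∀ v : V, v ∈ P (pt v) := fun v => (hpart v).choose_spec.1
  have hpt_uniq : ∀ v : V, ∀ j : Fin r, v ∈ P j → j = pt v :=
    fun v => (hpart v).choose_spec.2
  -- partition counting: each edge's vertices split among parts
  have hsum_card : ∀ e : Finset V, ∑ i : Fin r, (P i ∩ e).card = e.card := by
    intro e
    have h1 : ∀ i : Fin r, (P i ∩ e).card = ∑ v ∈ e, if v ∈ P i then 1 else 0 := by
      intro i
      rw [Finset.inter_comm, ← Finset.filter_mem_eq_inter, Finset.card_filter]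
    simp only [h1]
    rw [Finset.sum_comm]
    have h2 : ∀ v : V, ∑ i : Fin r, (if v ∈ P i then 1 else 0) = 1 := by
      intro v
      rw [← Finset.card_filter]
      have : Finset.univ.filter (fun i => v ∈ P i) = {pt v} := by
        ext j
        simp only [Finset.mem_filter, Finset.mem_univ, true_and, Finset.mem_singleton]
        exact ⟨fun h => hpt_uniq v j h, fun h => h ▸ hpt v⟩
      simp [this]
    calc ∑ v ∈ e, ∑ i : Fin r, (if v ∈ P i then 1 else 0) = ∑ v ∈ e, 1 := by
          exact Finset.sum_congr rfl (fun v _ => h2 v)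
      _ = e.card := by simp
  -- the key move inequality
  have hmove : ∀ (v : V) (i : Fin r), v ∈ P i → i ≠ last →
      Multiset.card (G.filter fun e => v ∈ e ∧ ¬(P last ∩ e).Nonempty)
        ≤ Multiset.card (G.filter fun e => P i ∩ e = {v}) := by
    intro v i hvi hine
    set Q : Fin r → Finset V := fun j =>
      if j = i then (P i).erase v else if j = last then insert v (P last) else P j with hQ
    have hQpart : ∀ w : V, ∃! j, w ∈ Q j := by
      intro w
      by_cases hw : w = v
      · subst hw
        refine ⟨last, ?_, ?_⟩
        · simp only [hQ]
          rw [if_neg (Ne.symm hine)]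
          simp
        · intro j hj
          simp only [hQ] at hj
          by_cases hji : j = i
          · rw [if_pos hji] at hj
            exact absurd hj (Finset.notMem_erase _ _)
          · rw [if_neg hji] at hj
            by_cases hjl : j = last
            · exact hjl
            · rw [if_neg hjl] at hj
              exact absurd ((hpt_uniq w j hj).trans (hpt_uniq w i hvi).symm) hji
      · obtain ⟨j₀, hj₀, huniq⟩ := hpart w
        refine ⟨j₀, ?_, ?_⟩
        · simp only [hQ]
          by_cases hji : j₀ = i
          · rw [if_pos hji]
            exact Finset.mem_erase.mpr ⟨hw, hji ▸ hj₀⟩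
          · rw [if_neg hji]
            by_cases hjl : j₀ = last
            · rw [if_pos hjl]
              exact Finset.mem_insert_of_mem (hjl ▸ hj₀)
            · rw [if_neg hjl]; exact hj₀
        · intro j hj
          simp only [hQ] at hj
          apply huniq
          by_cases hji : j = i
          · rw [if_pos hji] at hj
            exact hji ▸ Finset.mem_of_mem_erase hj
          · rw [if_neg hji] at hj
            by_cases hjl : j = last
            · rw [if_pos hjl] at hj
              exact hjl ▸ (Finset.mem_insert.mp hj).resolve_left hw
            · rw [if_neg hjl] at hj; exact hj
    have hkey : ∀ j : Fin r,
        edgesMeeting G (Q j) + (if j = i then Multiset.card (G.filter fun e => P i ∩ e = {v}) else 0)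
          = edgesMeeting G (P j)
            + (if j = last then Multiset.card (G.filter fun e => v ∈ e ∧ ¬(P last ∩ e).Nonempty) else 0) := by
      intro j
      by_cases hji : j = i
      · subst hji
        rw [if_pos rfl, if_neg hine]
        simp only [hQ, if_pos rfl]
        unfold edgesMeeting
        rw [card_filter_split G (fun e => (P j ∩ e).Nonempty) (fun e => P j ∩ e = {v})]
        have e1 : G.filter (fun e => (P j ∩ e).Nonempty ∧ P j ∩ e = {v})
            = G.filter (fun e => P j ∩ e = {v}) := by
          apply Multiset.filter_congr
          intro e _
          constructor
          · exact fun h => h.2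
          · intro h; exact ⟨h ▸ Finset.singleton_nonempty v, h⟩
        have e2 : G.filter (fun e => (P j ∩ e).Nonempty ∧ ¬(P j ∩ e = {v}))
            = G.filter (fun e => ((P j).erase v ∩ e).Nonempty) := by
          apply Multiset.filter_congr
          intro e _
          rw [Finset.erase_inter]
          constructor
          · rintro ⟨⟨x, hx⟩, hne⟩
            by_cases hxv : x = v
            · subst hxv
              have : ¬ (P j ∩ e ⊆ {x}) := by
                intro hsub
                rcases Finset.subset_singleton_iff.mp hsub with h | h
                · exact absurd (h ▸ hx) (Finset.notMem_empty x)
                · exact hne h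
              obtain ⟨y, hy, hyx⟩ := Finset.not_subset.mp this
              exact ⟨y, Finset.mem_erase.mpr ⟨by simpa using hyx, hy⟩⟩
            · exact ⟨x, Finset.mem_erase.mpr ⟨hxv, hx⟩⟩
          · rintro ⟨x, hx⟩
            obtain ⟨hxv, hx'⟩ := Finset.mem_erase.mp hx
            refine ⟨⟨x, hx'⟩, fun h => hxv (Finset.mem_singleton.mp (h ▸ hx'))⟩
        rw [e1, e2]
        omega
      · rw [if_neg hji]
        by_cases hjl : j = last
        · rw [if_pos hjl]
          have hQj : Q j = insert v (P last) := by
            simp only [hQ]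
            rw [if_neg hji, if_pos hjl]
          rw [hQj, hjl]
          unfold edgesMeeting
          rw [card_filter_split G (fun e => ((insert v (P last)) ∩ e).Nonempty)
            (fun e => (P last ∩ e).Nonempty)]
          have e1 : G.filter (fun e => ((insert v (P last)) ∩ e).Nonempty ∧ (P last ∩ e).Nonempty)
              = G.filter (fun e => (P last ∩ e).Nonempty) := by
            apply Multiset.filter_congr
            intro e _
            constructor
            · exact fun h => h.2
            · intro h
              refine ⟨h.mono (Finset.inter_subset_inter (Finset.subset_insert v _) le_rfl), h⟩
          have e2 : G.filter (fun e => ((insert v (P last)) ∩ e).Nonempty ∧ ¬(P last ∩ e).Nonempty)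
              = G.filter (fun e => v ∈ e ∧ ¬(P last ∩ e).Nonempty) := by
            apply Multiset.filter_congr
            intro e _
            constructor
            · rintro ⟨⟨x, hx⟩, hne⟩
              rw [Finset.mem_inter, Finset.mem_insert] at hx
              rcases hx.1 with h | h
              · exact ⟨h ▸ hx.2, hne⟩
              · exact absurd ⟨x, Finset.mem_inter.mpr ⟨h, hx.2⟩⟩ hne
            · rintro ⟨hv, hne⟩
              exact ⟨⟨v, Finset.mem_inter.mpr ⟨Finset.mem_insert_self _ _, hv⟩⟩, hne⟩
          rw [e1, e2]
          omega
        · rw [if_neg hjl]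
          have hQj : Q j = P j := by
            simp only [hQ]
            rw [if_neg hji, if_neg hjl]
          rw [hQj]
    have hsum := hmax Q hQpart
    have hsum2 : ∑ j : Fin r, (edgesMeeting G (Q j)
          + (if j = i then Multiset.card (G.filter fun e => P i ∩ e = {v}) else 0))
        = ∑ j : Fin r, (edgesMeeting G (P j)
          + (if j = last then Multiset.card (G.filter fun e => v ∈ e ∧ ¬(P last ∩ e).Nonempty) else 0)) :=
      Finset.sum_congr rfl (fun j _ => hkey j)
    rw [Finset.sum_add_distrib, Finset.sum_add_distrib, Finset.sum_ite_eq',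
      Finset.sum_ite_eq'] at hsum2
    simp only [Finset.mem_univ, if_pos] at hsum2
    omega
  -- per-vertex inequality
  have hvert : ∀ v : V,
      Multiset.card (G.filter fun e => v ∈ e ∧ ¬(P last ∩ e).Nonempty)
        ≤ Multiset.card (G.filter fun e => ∃ j : Fin r, j ≠ last ∧ P j ∩ e = {v}) := by
    intro v
    by_cases hi : pt v = last
    · have : G.filter (fun e => v ∈ e ∧ ¬(P last ∩ e).Nonempty) = 0 := by
        rw [Multiset.filter_eq_nil]
        rintro e _ ⟨hve, hne⟩
        exact hne ⟨v, Finset.mem_inter.mpr ⟨hi ▸ hpt v, hve⟩⟩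
      rw [this]
      simp
    · refine le_trans (hmove v (pt v) (hpt v) hi) ?_
      exact card_filter_mono G _ _ (fun e _ h => ⟨pt v, hi, h⟩)
  -- names for the per-edge counts
  set C : Finset V → Prop := fun e => (P last ∩ e).Nonempty with hC
  set S : Finset V → ℕ := fun e =>
    (Finset.univ.filter fun i : Fin r => i ≠ last ∧ ∃ w : V, P i ∩ e = {w}).card with hS
  set T : Finset V → ℕ := fun e =>
    (Finset.univ.filter fun i : Fin r => (P i ∩ e).Nonempty).card with hT
  -- per-edge: S e + 1 ≤ T e
  have hST : ∀ e ∈ G, S e + 1 ≤ T e := by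
    intro e he
    have hsub : (Finset.univ.filter fun i : Fin r => i ≠ last ∧ ∃ w : V, P i ∩ e = {w})
        ⊆ (Finset.univ.filter fun i : Fin r => (P i ∩ e).Nonempty) := by
      intro i hi
      simp only [Finset.mem_filter, Finset.mem_univ, true_and] at hi ⊢
      obtain ⟨_, w, hw⟩ := hi
      exact hw ▸ Finset.singleton_nonempty w
    have hlt : (Finset.univ.filter fun i : Fin r => i ≠ last ∧ ∃ w : V, P i ∩ e = {w})
        ⊂ (Finset.univ.filter fun i : Fin r => (P i ∩ e).Nonempty) := by
      rw [Finset.ssubset_iff_of_subset hsub]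
      by_cases hcl : (P last ∩ e).Nonempty
      · exact ⟨last, by simp [hcl], by simp⟩
      · by_contra hcon
        push_neg at hcon
        have hTS : ∀ i : Fin r, (P i ∩ e).Nonempty → (i ≠ last ∧ ∃ w : V, P i ∩ e = {w}) := by
          intro i hi
          have := hcon i (by simp [hi])
          simpa using this
        have hcard1 : ∀ i : Fin r, (P i ∩ e).card = if (P i ∩ e).Nonempty then 1 else 0 := by
          intro i
          by_cases hi : (P i ∩ e).Nonempty
          · obtain ⟨_, w, hw⟩ := hTS i hi
            simp [hi, hw]
          · rw [Finset.not_nonempty_iff_eq_empty] at hi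
            simp [hi]
        have hre : e.card = r := hunif e he
        have := hsum_card e
        rw [hre] at this
        simp only [hcard1] at this
        have hTsub : (Finset.univ.filter fun i : Fin r => (P i ∩ e).Nonempty)
            ⊆ Finset.univ.erase last := by
          intro i hi
          simp only [Finset.mem_filter, Finset.mem_univ, true_and] at hi
          refine Finset.mem_erase.mpr ⟨?_, Finset.mem_univ i⟩
          exact (hTS i hi).1
        have hTcard : (Finset.univ.filter fun i : Fin r => (P i ∩ e).Nonempty).card ≤ r - 1 := by
          refine le_trans (Finset.card_le_card hTsub) ?_
          rw [Finset.card_erase_of_mem (Finset.mem_univ _)]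
          simp
        rw [← Finset.card_filter] at this
        omega
    have hlt2 := Finset.card_lt_card hlt
    simp only [hS, hT]
    omega
  -- swap sums
  have hswapT : ∑ i : Fin r, edgesMeeting G (P i) = (G.map T).sum := by
    unfold edgesMeeting
    exact swap_sum G (fun i e => (P i ∩ e).Nonempty)
  have hswapG : ∑ v : V, Multiset.card (G.filter fun e => v ∈ e ∧ ¬ C e)
      = (G.map fun e => (Finset.univ.filter fun v : V => v ∈ e ∧ ¬ C e).card).sum :=
    swap_sum G (fun v e => v ∈ e ∧ ¬ C e)
  have hswapL : ∑ v : V, Multiset.card (G.filter fun e => ∃ j : Fin r, j ≠ last ∧ P j ∩ e = {v})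
      = (G.map fun e => (Finset.univ.filter
          fun v : V => ∃ j : Fin r, j ≠ last ∧ P j ∩ e = {v}).card).sum :=
    swap_sum G (fun v e => ∃ j : Fin r, j ≠ last ∧ P j ∩ e = {v})
  -- per-edge: the vertex count is at most S e
  have hLS : ∀ e : Finset V,
      (Finset.univ.filter fun v : V => ∃ j : Fin r, j ≠ last ∧ P j ∩ e = {v}).card ≤ S e := by
    intro e
    apply Finset.card_le_card_of_injOn pt
    · intro v hv
      simp only [Finset.coe_filter, Set.mem_setOf_eq, Finset.mem_filter, Finset.mem_univ, true_and] at hv ⊢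
      obtain ⟨j, hj, hje⟩ := hv
      have hvj : v ∈ P j := Finset.mem_inter.mp (hje ▸ Finset.mem_singleton_self v) |>.1
      have : j = pt v := hpt_uniq v j hvj
      exact ⟨this ▸ hj, v, this ▸ hje⟩
    · intro v hv w hw hvw
      simp only [Finset.coe_filter, Set.mem_setOf_eq, Finset.mem_univ, true_and] at hv hw
      obtain ⟨j, hj, hje⟩ := hv
      obtain ⟨k, hk, hke⟩ := hw
      have hvj : v ∈ P j := Finset.mem_inter.mp (hje ▸ Finset.mem_singleton_self v) |>.1
      have hwk : w ∈ P k := Finset.mem_inter.mp (hke ▸ Finset.mem_singleton_self w) |>.1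
      have h1 : j = pt v := hpt_uniq v j hvj
      have h2 : k = pt w := hpt_uniq w k hwk
      have : P j ∩ e = P k ∩ e := by rw [h1, h2, hvw]
      have := hje ▸ hke ▸ this
      exact Finset.singleton_inj.mp this
  -- the per-edge gain count
  have hGcount : ∀ e ∈ G,
      (Finset.univ.filter fun v : V => v ∈ e ∧ ¬ C e).card = if C e then 0 else r := by
    intro e he
    by_cases hce : C e
    · simp [hce]
    · have : (Finset.univ.filter fun v : V => v ∈ e ∧ ¬ C e) = e := by
        ext v; simp [hce]
      rw [if_neg hce, this, hunif e he]
  -- main counting inequality in ℕ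
  have hmain : (r + 1) * m ≤ (∑ i : Fin r, edgesMeeting G (P i)) + r * edgesMeeting G (P last) := by
    have h1 : (G.map fun e => (Finset.univ.filter fun v : V => v ∈ e ∧ ¬ C e).card).sum
        = r * Multiset.card (G.filter fun e => ¬ C e) := by
      rw [Multiset.map_congr rfl hGcount]
      have : (G.map fun e => if C e then 0 else r)
          = G.map fun e => if ¬ C e then r else 0 := by
        apply Multiset.map_congr rfl
        intro e _
        by_cases hce : C e <;> simp [hce]
      rw [this, sum_map_ite]
    have h2 : Multiset.card (G.filter C) + Multiset.card (G.filter fun e => ¬ C e) = m := by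
      rw [← hm, ← Multiset.card_add, Multiset.filter_add_not]
    have h3 : edgesMeeting G (P last) = Multiset.card (G.filter C) := rfl
    have h4 : ∑ v : V, Multiset.card (G.filter fun e => v ∈ e ∧ ¬ C e)
        ≤ ∑ v : V, Multiset.card (G.filter fun e => ∃ j : Fin r, j ≠ last ∧ P j ∩ e = {v}) :=
      Finset.sum_le_sum (fun v _ => hvert v)
    have h5 : (G.map fun e => (Finset.univ.filter
          fun v : V => ∃ j : Fin r, j ≠ last ∧ P j ∩ e = {v}).card).sum
        ≤ (G.map S).sum :=
      Multiset.sum_map_le_sum_map _ _ (fun e _ => hLS e)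
    have h6 : (G.map fun e => S e + 1).sum ≤ (G.map T).sum :=
      Multiset.sum_map_le_sum_map _ _ hST
    have h7 : (G.map fun e => S e + 1).sum = (G.map S).sum + m := by
      rw [Multiset.sum_map_add]
      congr 1
      simp [hm]
    have step1 : r * Multiset.card (G.filter fun e => ¬ C e) + m
        ≤ ∑ i : Fin r, edgesMeeting G (P i) := by
      rw [hswapT, ← h1, ← hswapG]
      calc (∑ v : V, Multiset.card (G.filter fun e => v ∈ e ∧ ¬ C e)) + m
          ≤ (∑ v : V, Multiset.card
              (G.filter fun e => ∃ j : Fin r, j ≠ last ∧ P j ∩ e = {v})) + m :=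
            Nat.add_le_add_right h4 m
        _ = (G.map fun e => (Finset.univ.filter
              fun v : V => ∃ j : Fin r, j ≠ last ∧ P j ∩ e = {v}).card).sum + m := by
            rw [hswapL]
        _ ≤ (G.map S).sum + m := Nat.add_le_add_right h5 m
        _ = (G.map fun e => S e + 1).sum := h7.symm
        _ ≤ (G.map T).sum := h6
    calc (r + 1) * m = r * m + m := by ring
      _ = r * (Multiset.card (G.filter C) + Multiset.card (G.filter fun e => ¬ C e)) + m := by
          rw [h2]
      _ = r * Multiset.card (G.filter C) + (r * Multiset.card (G.filter fun e => ¬ C e) + m) := by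
          ring
      _ ≤ r * Multiset.card (G.filter C) + ∑ i : Fin r, edgesMeeting G (P i) :=
          Nat.add_le_add_left step1 _
      _ = (∑ i : Fin r, edgesMeeting G (P i)) + r * edgesMeeting G (P last) := by
          rw [h3, Nat.add_comm]
  -- move to the reals
  have hVr' : (edgesMeeting G (P last) : ℝ) < c * m / 2 := hVr
  have hm0 : 0 < m := by
    by_contra h
    push_neg at h
    interval_cases m
    have : (0:ℝ) ≤ (edgesMeeting G (P last) : ℝ) := Nat.cast_nonneg _
    rw [Nat.cast_zero] at hVr'
    nlinarith
  have hr0 : (0:ℝ) < r := by exact_mod_cast (by omega : 0 < r)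
  have hmR : (0:ℝ) < m := by exact_mod_cast hm0
  have hcast : ((r:ℝ) + 1) * m ≤ (∑ i : Fin r, (edgesMeeting G (P i) : ℝ))
      + r * (edgesMeeting G (P last) : ℝ) := by
    have := hmain
    push_cast
    exact_mod_cast hmain
  constructor
  · have hmul : (r : ℝ) * (edgesMeeting G (P last) : ℝ) < r * (c * m / 2) :=
      mul_lt_mul_of_pos_left hVr' hr0
    have key : ((r:ℝ) + 1) * m - r * (c * m / 2) < ∑ i : Fin r, (edgesMeeting G (P i) : ℝ) := by
      linarith
    rw [show (1:ℝ) / r * ((∑ i : Fin r, (edgesMeeting G (P i) : ℝ)) / m)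
        = (∑ i : Fin r, (edgesMeeting G (P i) : ℝ)) / (r * m) by ring]
    rw [lt_div_iff₀ (by positivity : (0:ℝ) < r * m)]
    have expand : (((r:ℝ) + 1) / r - c / 2) * (r * m) = ((r:ℝ) + 1) * m - r * (c * m / 2) := by
      field_simp
    rw [expand]
    exact key
  · have hx : (4:ℝ) ≤ (r:ℝ) := by exact_mod_cast hr
    have hx0 : (0:ℝ) < (r:ℝ) := by linarith
    have hx4 : (0:ℝ) < 3 * (r:ℝ) - 4 := by linarith
    rw [hc]
    apply max_le
    · have key : ((r:ℝ) + 1) / r - ((r:ℝ) / (3 * r - 4)) / 2 - 2 * ((r:ℝ) / (3 * r - 4))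
          = (((r:ℝ) - 4) * ((r:ℝ) + 2)) / (2 * r * (3 * r - 4)) := by
        rw [div_div, div_sub_div _ _ hx0.ne' (by positivity), mul_div_assoc', div_sub_div _ _ (by positivity) hx4.ne', div_eq_div_iff (by positivity) (by positivity)]
        ring
      have hnn : (0:ℝ) ≤ (((r:ℝ) - 4) * ((r:ℝ) + 2)) / (2 * r * (3 * r - 4)) := by
        apply div_nonneg
        · nlinarith
        · nlinarith
      linarith [key ▸ hnn]
    · have key : ((r:ℝ) + 1) / r - ((r:ℝ) / (3 * r - 4)) / 2
          - (2 / 3 + ((r:ℝ) / (3 * r - 4)) / 6)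
          = ((r:ℝ) * r + 5 * r - 12) / (3 * r * (3 * r - 4)) := by
        rw [div_div, div_div, div_sub_div _ _ hx0.ne' (by positivity), div_add_div _ _ (by norm_num) (by positivity), div_sub_div _ _ (by positivity) (by positivity), div_eq_div_iff (by positivity) (by positivity)]
        ring
      have hnn : (0:ℝ) ≤ ((r:ℝ) * r + 5 * r - 12) / (3 * r * (3 * r - 4)) := by
        apply div_nonneg
        · nlinarith
        · nlinarith
      linarith [key ▸ hnn]
end
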